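/- arXiv:2310.09980 — 9 statements merged into one kernel-verified Lean document; each statement's English description precedes it below -/
import Mathlib

section
/- Let D ≥ 2 be a squarefree integer with D ≠ 5 and K = ℚ(√D), and let α = (⌈2ξ_D⌉ + 2) + 2ω_D. If ⌈ξ_D⌉ − ξ_D > 1/2, then p_K(α) = 6. -/
noncomputable section

/-- `ω_D`, so that `(1, ω_D)` is an integral basis of `𝓞(ℚ(√D))`. -/
def omegaD (D : ℤ) : ℝ := if D % 4 = 1 then (1 + Real.sqrt D) / 2 else Real.sqrt D

/-- The Galois conjugate `ω_D′` of `ω_D`. -/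
def omegaD' (D : ℤ) : ℝ := if D % 4 = 1 then (1 - Real.sqrt D) / 2 else -(Real.sqrt D)

/-- `ξ_D = -ω_D′`. -/
def xiD (D : ℤ) : ℝ := -omegaD' D

/-- The real embedding of `𝓞 K`, an element `(x, y)` in the integral basis
`(1, ω_D)` being sent to `x + y ω_D`. -/
def emb (D : ℤ) (a : ℤ × ℤ) : ℝ := a.1 + a.2 * omegaD D

/-- The conjugate real embedding, sending `(x, y)` to `x + y ω_D′`. -/
def embConj (D : ℤ) (a : ℤ × ℤ) : ℝ := a.1 + a.2 * omegaD' D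

/-- An element of `𝓞 K` is totally positive if it and its conjugate are positive. -/
def TotPos (D : ℤ) (a : ℤ × ℤ) : Prop := 0 < emb D a ∧ 0 < embConj D a

/-- The partition function `p_K` of `K = ℚ(√D)`: the number of multisets of
totally positive integers of `K` with sum `α`. -/
def pK (D : ℤ) (α : ℤ × ℤ) : ℕ :=
  Nat.card {m : Multiset (ℤ × ℤ) // (∀ β ∈ m, TotPos D β) ∧ m.sum = α}

end

lemma totPos_iff (D : ℤ) (x y : ℤ) :
    TotPos D (x, y) ↔ 0 < (x : ℝ) + y * omegaD D ∧ 0 < (x : ℝ) - y * xiD D := by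
  have h : omegaD' D = -xiD D := by simp [xiD]
  simp [TotPos, emb, embConj, h]

lemma sum_fst_snd (m : Multiset (ℤ × ℤ)) :
    m.sum = ((m.map Prod.fst).sum, (m.map Prod.snd).sum) := by
  induction m using Multiset.induction with
  | empty => simp; rfl
  | cons a s ih => simp [ih, Prod.ext_iff]

lemma L1 {ω ξ : ℝ} {c : ℤ} (hcξ : (c : ℝ) - 1 < ξ) (hωξ : ξ ≤ ω) {x y : ℤ}
    (h1 : 0 < (x : ℝ) + y * ω) (h2 : 0 < (x : ℝ) - y * ξ) :
    (c - 1) * |y| + 1 ≤ x := by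
  have key : ((c - 1) * |y| : ℤ) < (x : ℝ) := by
    push_cast
    rcases le_or_gt 0 y with hy | hy
    · have hy' : (0:ℝ) ≤ (y:ℝ) := by exact_mod_cast hy
      rw [abs_of_nonneg hy']
      nlinarith [mul_le_mul_of_nonneg_right hcξ.le hy']
    · have hy' : (y : ℝ) < 0 := by exact_mod_cast hy
      rw [abs_of_neg hy']
      nlinarith [mul_le_mul_of_nonpos_right hcξ.le hy'.le, mul_le_mul_of_nonpos_right hωξ hy'.le]
  have : ((c - 1) * |y| : ℤ) < x := by exact_mod_cast key
  omega

lemma totPos_of {D : ℤ} {ξ : ℝ} (hξ : xiD D = ξ) (hξ0 : 0 < ξ) (hωξ : ξ ≤ omegaD D)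
    {x y : ℤ} (hy : 0 ≤ y) (hx : (y : ℝ) * ξ < x) : TotPos D (x, y) := by
  rw [totPos_iff, hξ]
  have hy' : (0:ℝ) ≤ (y:ℝ) := by exact_mod_cast hy
  constructor
  · nlinarith
  · linarith

lemma sum_bound (c : ℤ) (m : Multiset (ℤ × ℤ))
    (h : ∀ β ∈ m, (c - 1) * |β.2| + 1 ≤ β.1) :
    (c - 1) * (m.map (fun β => |β.2|)).sum + (Multiset.card m : ℤ) ≤ (m.map Prod.fst).sum := by
  induction m using Multiset.induction with
  | empty => simp
  | cons a s ih =>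
    simp only [Multiset.map_cons, Multiset.sum_cons, Multiset.card_cons]
    have h1 := h a (Multiset.mem_cons_self a s)
    have h2 := ih (fun β hβ => h β (Multiset.mem_cons_of_mem hβ))
    push_cast
    nlinarith [h1, h2]

lemma abs_sum_ge (m : Multiset (ℤ × ℤ)) :
    (m.map Prod.snd).sum ≤ (m.map (fun β => |β.2|)).sum :=
  Multiset.sum_map_le_sum_map _ _ (fun i _ => le_abs_self _)

lemma card_le_sum (m : Multiset ℤ) (h : ∀ x ∈ m, 1 ≤ x) :
    (Multiset.card m : ℤ) ≤ m.sum := by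
  have := Multiset.card_nsmul_le_sum h
  simpa using this

lemma zero_part (m0 : Multiset (ℤ × ℤ)) (h : ∀ β ∈ m0, β.2 = 0 ∧ 1 ≤ β.1) :
    ((m0.map Prod.fst).sum = 0 → m0 = 0) ∧
    ((m0.map Prod.fst).sum = 1 → m0 = {(1, 0)}) ∧
    ((m0.map Prod.fst).sum = 2 → m0 = {(2, 0)} ∨ m0 = {(1, 0), (1, 0)}) := by
  have hcard : (Multiset.card m0 : ℤ) ≤ (m0.map Prod.fst).sum := by
    have := card_le_sum (m0.map Prod.fst) (by
      intro x hx
      obtain ⟨β, hβ, rfl⟩ := Multiset.mem_map.mp hx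
      exact (h β hβ).2)
    simpa using this
  refine ⟨?_, ?_, ?_⟩
  · intro hs
    rw [hs] at hcard
    have : Multiset.card m0 = 0 := by omega
    exact Multiset.card_eq_zero.mp this
  · intro hs
    rw [hs] at hcard
    have hc : Multiset.card m0 = 0 ∨ Multiset.card m0 = 1 := by omega
    rcases hc with hc | hc
    · rw [Multiset.card_eq_zero.mp hc] at hs; simp at hs
    · obtain ⟨a, rfl⟩ := Multiset.card_eq_one.mp hc
      simp only [Multiset.map_singleton, Multiset.sum_singleton] at hs
      have ha := h a (Multiset.mem_singleton_self a)
      have : a = (1, 0) := Prod.ext hs ha.1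
      rw [this]
  · intro hs
    rw [hs] at hcard
    have hc : Multiset.card m0 = 0 ∨ Multiset.card m0 = 1 ∨ Multiset.card m0 = 2 := by omega
    rcases hc with hc | hc | hc
    · rw [Multiset.card_eq_zero.mp hc] at hs; simp at hs
    · obtain ⟨a, rfl⟩ := Multiset.card_eq_one.mp hc
      simp only [Multiset.map_singleton, Multiset.sum_singleton] at hs
      have ha := h a (Multiset.mem_singleton_self a)
      left
      rw [show a = (2, 0) from Prod.ext hs ha.1]
    · obtain ⟨a, b, rfl⟩ := Multiset.card_eq_two.mp hc
      have ha := h a (by simp)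
      have hb := h b (by simp)
      simp only [Multiset.insert_eq_cons, Multiset.map_cons, Multiset.sum_cons,
        Multiset.map_singleton, Multiset.sum_singleton] at hs
      right
      have ha1 : a.1 = 1 := by omega
      have hb1 : b.1 = 1 := by omega
      rw [show a = (1,0) from Prod.ext ha1 ha.1, show b = (1,0) from Prod.ext hb1 hb.1]

lemma forward (D : ℤ) (ξ : ℝ) (c : ℤ) (hξ : xiD D = ξ)
    (hωξ : ξ ≤ omegaD D)
    (hc1 : (c : ℝ) - 1 < ξ) (hc3 : 2 ≤ c)
    (m : Multiset (ℤ × ℤ)) (hm : ∀ β ∈ m, TotPos D β) (hsum : m.sum = (2 * c + 1, 2)) :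
    m = {(2 * c + 1, 2)} ∨ m = {(1, 0), (2 * c, 2)} ∨ m = {(2, 0), (2 * c - 1, 2)} ∨
    m = {(1, 0), (1, 0), (2 * c - 1, 2)} ∨ m = {(c, 1), (c + 1, 1)} ∨
    m = {(1, 0), (c, 1), (c, 1)} := by
  classical
  -- per-element lower bound
  have hL1 : ∀ β ∈ m, (c - 1) * |β.2| + 1 ≤ β.1 := by
    intro β hβ
    have h := (totPos_iff D β.1 β.2).mp (by simpa using hm β hβ)
    rw [hξ] at h
    exact L1 hc1 hωξ h.1 h.2
  have hXY := sum_fst_snd m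
  rw [hsum] at hXY
  have hX : (m.map Prod.fst).sum = 2 * c + 1 := by
    have := congrArg Prod.fst hXY; simpa using this.symm
  have hY : (m.map Prod.snd).sum = 2 := by
    have := congrArg Prod.snd hXY; simpa using this.symm
  -- Step A : all second coordinates nonneg
  have hy0 : ∀ β ∈ m, 0 ≤ β.2 := by
    by_contra hcon
    push_neg at hcon
    obtain ⟨β₀, hβ₀m, hβ₀⟩ := hcon
    set m' := m.erase β₀ with hm'def
    have hm' : β₀ ::ₘ m' = m := Multiset.cons_erase hβ₀m
    have hX' : β₀.1 + (m'.map Prod.fst).sum = 2 * c + 1 := by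
      rw [← hm'] at hX; simpa using hX
    have hY' : β₀.2 + (m'.map Prod.snd).sum = 2 := by
      rw [← hm'] at hY; simpa using hY
    have h1 : (c - 1) * |β₀.2| + 1 ≤ β₀.1 := hL1 β₀ hβ₀m
    have habs : 1 ≤ |β₀.2| := by rw [abs_of_neg hβ₀]; omega
    have hb1 : c ≤ β₀.1 := by nlinarith
    have hsb := sum_bound c m' (fun β hβ => hL1 β (by rw [← hm']; exact Multiset.mem_cons_of_mem hβ))
    have habs' : 3 ≤ (m'.map (fun β => |β.2|)).sum := by
      have h := abs_sum_ge m'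
      have hb2 : β₀.2 ≤ -1 := by omega
      linarith
    have hcd : 1 ≤ (Multiset.card m' : ℤ) := by
      rcases Multiset.empty_or_exists_mem m' with h0 | ⟨a, ha⟩
      · rw [h0] at hY'; simp at hY'; omega
      · have hne : m' ≠ 0 := by intro h0; rw [h0] at ha; simp at ha
        have := Multiset.card_pos.mpr hne
        exact_mod_cast this
    nlinarith [hsb, habs', hcd, hb1]
  -- split into zero and positive parts
  set m0 := m.filter (fun β => β.2 = 0) with hm0def
  set mp := m.filter (fun β => ¬ β.2 = 0) with hmpdef
  have hadd : m0 + mp = m := Multiset.filter_add_not _ m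
  have hm0 : ∀ β ∈ m0, β.2 = 0 ∧ 1 ≤ β.1 := by
    intro β hβ
    have h2 := (Multiset.mem_filter.mp hβ).2
    have h1 := hL1 β (Multiset.mem_filter.mp hβ).1
    exact ⟨h2, by rw [h2] at h1; simpa using h1⟩
  have hmp : ∀ β ∈ mp, 1 ≤ β.2 := by
    intro β hβ
    have h2 := (Multiset.mem_filter.mp hβ).2
    have h3 := hy0 β (Multiset.mem_filter.mp hβ).1
    omega
  have hmpm : ∀ β ∈ mp, β ∈ m := fun β hβ => (Multiset.mem_filter.mp hβ).1
  -- sums split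
  have hXsplit : (m0.map Prod.fst).sum + (mp.map Prod.fst).sum = 2 * c + 1 := by
    rw [← hX, ← hadd]; simp
  have hY0 : (m0.map Prod.snd).sum = 0 := by
    rw [Multiset.sum_eq_zero]
    intro x hx
    obtain ⟨β, hβ, rfl⟩ := Multiset.mem_map.mp hx
    exact (hm0 β hβ).1
  have hYp : (mp.map Prod.snd).sum = 2 := by
    have : (m0.map Prod.snd).sum + (mp.map Prod.snd).sum = 2 := by
      rw [← hY, ← hadd]; simp
    omega
  have hs0 : 0 ≤ (m0.map Prod.fst).sum := by
    have := card_le_sum (m0.map Prod.fst) (by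
      intro x hx
      obtain ⟨β, hβ, rfl⟩ := Multiset.mem_map.mp hx
      exact (hm0 β hβ).2)
    have h0 : (0:ℤ) ≤ (Multiset.card (m0.map Prod.fst) : ℤ) := by positivity
    omega
  have hcardp : (Multiset.card mp : ℤ) ≤ 2 := by
    have := card_le_sum (mp.map Prod.snd) (by
      intro x hx
      obtain ⟨β, hβ, rfl⟩ := Multiset.mem_map.mp hx
      exact hmp β hβ)
    rw [hYp] at this
    simpa using this
  have hz := zero_part m0 hm0
  have hcmp : Multiset.card mp = 0 ∨ Multiset.card mp = 1 ∨ Multiset.card mp = 2 := by omega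
  rcases hcmp with hc' | hc' | hc'
  · rw [Multiset.card_eq_zero.mp hc'] at hYp; simp at hYp
  · -- one part with y = 2
    obtain ⟨a, ha⟩ := Multiset.card_eq_one.mp hc'
    rw [ha] at hYp
    simp only [Multiset.map_singleton, Multiset.sum_singleton] at hYp
    have haM : a ∈ m := hmpm a (ha ▸ Multiset.mem_singleton_self a)
    have ha1 : 2 * c - 1 ≤ a.1 := by
      have := hL1 a haM
      rw [hYp] at this
      norm_num at this
      omega
    rw [ha] at hXsplit
    simp only [Multiset.map_singleton, Multiset.sum_singleton] at hXsplit
    have hs : (m0.map Prod.fst).sum = 0 ∨ (m0.map Prod.fst).sum = 1 ∨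
        (m0.map Prod.fst).sum = 2 := by omega
    rcases hs with hs | hs | hs
    · left
      have h0 : m0 = 0 := hz.1 hs
      have haeq : a = (2 * c + 1, 2) := Prod.ext (by omega) hYp
      rw [← hadd, h0, ha, haeq]; rfl
    · right; left
      have h0 : m0 = {(1,0)} := hz.2.1 hs
      have haeq : a = (2 * c, 2) := Prod.ext (by omega) hYp
      rw [← hadd, h0, ha, haeq]; rfl
    · rcases hz.2.2 hs with h0 | h0
      · right; right; left
        have haeq : a = (2 * c - 1, 2) := Prod.ext (by omega) hYp
        rw [← hadd, h0, ha, haeq]; rfl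
      · right; right; right; left
        have haeq : a = (2 * c - 1, 2) := Prod.ext (by omega) hYp
        rw [← hadd, h0, ha, haeq]; rfl
  · -- two parts with y = 1
    obtain ⟨a, b, hab⟩ := Multiset.card_eq_two.mp hc'
    have haM : a ∈ m := hmpm a (hab ▸ (by simp))
    have hbM : b ∈ m := hmpm b (hab ▸ (by simp))
    have hamp : a ∈ mp := hab ▸ (by simp)
    have hbmp : b ∈ mp := hab ▸ (by simp)
    rw [hab] at hYp hXsplit
    simp only [Multiset.insert_eq_cons, Multiset.map_cons, Multiset.sum_cons,
      Multiset.map_singleton, Multiset.sum_singleton] at hYp hXsplit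
    have ha2 : a.2 = 1 := by have := hmp a hamp; have := hmp b hbmp; omega
    have hb2 : b.2 = 1 := by have := hmp a hamp; have := hmp b hbmp; omega
    have ha1 : c ≤ a.1 := by have := hL1 a haM; rw [ha2] at this; simpa using this
    have hb1 : c ≤ b.1 := by have := hL1 b hbM; rw [hb2] at this; simpa using this
    have hs : (m0.map Prod.fst).sum = 0 ∨ (m0.map Prod.fst).sum = 1 := by omega
    rcases hs with hs | hs
    · right; right; right; right; left
      have h0 : m0 = 0 := hz.1 hs
      have hcase : (a.1 = c ∧ b.1 = c + 1) ∨ (a.1 = c + 1 ∧ b.1 = c) := by omega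
      rcases hcase with ⟨h1, h2⟩ | ⟨h1, h2⟩
      · rw [← hadd, h0, hab, show a = (c,1) from Prod.ext h1 ha2,
          show b = (c+1,1) from Prod.ext h2 hb2]
        rfl
      · rw [← hadd, h0, hab, show a = (c+1,1) from Prod.ext h1 ha2,
          show b = (c,1) from Prod.ext h2 hb2]
        simpa using Multiset.cons_swap (c+1,1) (c,1) 0
    · right; right; right; right; right
      have h0 : m0 = {(1,0)} := hz.2.1 hs
      have h1 : a.1 = c := by omega
      have h2 : b.1 = c := by omega
      rw [← hadd, h0, hab, show a = (c,1) from Prod.ext h1 ha2,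
        show b = (c,1) from Prod.ext h2 hb2]
      rfl

theorem six_partitions (D : ℤ) (hD : 2 ≤ D) (hsf : Squarefree D) (hD5 : D ≠ 5)
    (h : (⌈xiD D⌉ : ℝ) - xiD D > 1 / 2) :
    pK D (⌈2 * xiD D⌉ + 2, 2) = 6 := by
  classical
  have hD0 : (0:ℝ) ≤ (D:ℝ) := by positivity
  have hsq : (Real.sqrt D) ^ 2 = (D : ℝ) := Real.sq_sqrt hD0
  have hsqnn : 0 ≤ Real.sqrt D := Real.sqrt_nonneg _
  -- 1 < ξ
  have hξ1 : 1 < xiD D := by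
    by_cases hmod : D % 4 = 1
    · have hD9 : 9 < D := by
        by_contra hco
        push_neg at hco
        have : D = 5 ∨ D = 9 := by omega
        rcases this with rfl | rfl
        · exact hD5 rfl
        · have h3 : ((3:ℤ) * 3) ∣ 9 := by norm_num
          have := hsf 3 h3
          rw [Int.isUnit_iff] at this
          omega
      have h3 : (3:ℝ) < Real.sqrt D := by
        rw [show (3:ℝ) = Real.sqrt 9 by
          rw [show (9:ℝ) = 3^2 by norm_num, Real.sqrt_sq (by norm_num)]]
        apply Real.sqrt_lt_sqrt (by norm_num)
        exact_mod_cast hD9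
      simp only [xiD, omegaD', hmod, if_true]
      linarith
    · have h1 : (1:ℝ) < Real.sqrt D := by
        rw [show (1:ℝ) = Real.sqrt 1 by simp]
        apply Real.sqrt_lt_sqrt (by norm_num)
        exact_mod_cast (by omega : (1:ℤ) < D)
      simp only [xiD, omegaD', hmod, if_false]
      linarith
  have hωξ : xiD D ≤ omegaD D := by
    by_cases hmod : D % 4 = 1
    · simp only [xiD, omegaD', omegaD, hmod, if_true]
      linarith
    · simp only [xiD, omegaD', omegaD, hmod, if_false]
      linarith
  set ξ := xiD D with hξdef
  set c : ℤ := ⌈ξ⌉ with hcdef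
  have hc1 : (c : ℝ) - 1 < ξ := by
    have := Int.ceil_lt_add_one ξ
    linarith
  have hc2 : ξ < (c : ℝ) - 1 / 2 := by linarith
  have hξc : ξ ≤ (c : ℝ) := Int.le_ceil ξ
  have hc3 : 2 ≤ c := by
    have h1 : (1:ℝ) < (c:ℝ) := lt_of_lt_of_le hξ1 hξc
    have h2 : (1:ℤ) < c := by exact_mod_cast h1
    omega
  have hξ0 : 0 < ξ := by linarith
  have hceil : ⌈2 * ξ⌉ = 2 * c - 1 := by
    rw [Int.ceil_eq_iff]
    constructor
    · push_cast; linarith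
    · push_cast; linarith
  have hTP : ∀ x y : ℤ, 0 ≤ y → (y:ℝ) * ξ < x → TotPos D (x, y) :=
    fun x y hy hx => totPos_of hξdef.symm hξ0 hωξ hy hx
  rw [hceil, show 2 * c - 1 + 2 = 2 * c + 1 by ring]
  -- the six partitions
  set m1 : Multiset (ℤ × ℤ) := {(2 * c + 1, 2)} with hm1
  set m2 : Multiset (ℤ × ℤ) := {(1, 0), (2 * c, 2)} with hm2
  set m3 : Multiset (ℤ × ℤ) := {(2, 0), (2 * c - 1, 2)} with hm3
  set m4 : Multiset (ℤ × ℤ) := {(1, 0), (1, 0), (2 * c - 1, 2)} with hm4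
  set m5 : Multiset (ℤ × ℤ) := {(c, 1), (c + 1, 1)} with hm5
  set m6 : Multiset (ℤ × ℤ) := {(1, 0), (c, 1), (c, 1)} with hm6
  set F : Finset (Multiset (ℤ × ℤ)) := {m1, m2, m3, m4, m5, m6} with hF
  have hset : {m : Multiset (ℤ × ℤ) | (∀ β ∈ m, TotPos D β) ∧ m.sum = (2 * c + 1, 2)}
      = (F : Set (Multiset (ℤ × ℤ))) := by
    ext m
    simp only [Set.mem_setOf_eq, Finset.coe_insert, Set.mem_insert_iff,
      Finset.coe_singleton, Set.mem_singleton_iff, hF]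
    constructor
    · intro ⟨hm, hsum⟩
      exact forward D ξ c hξdef.symm hωξ hc1 hc3 m hm hsum
    · intro hmem
      rcases hmem with rfl | rfl | rfl | rfl | rfl | rfl
      · refine ⟨?_, ?_⟩
        · intro β hβ
          rw [hm1] at hβ
          rw [Multiset.mem_singleton.mp hβ]
          exact hTP _ _ (by norm_num) (by push_cast; linarith)
        · simp [hm1]
      · refine ⟨?_, ?_⟩
        · intro β hβ
          rw [hm2] at hβ
          simp only [Multiset.insert_eq_cons, Multiset.mem_cons, Multiset.mem_singleton] at hβ
          rcases hβ with rfl | rfl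
          · exact hTP _ _ (by norm_num) (by push_cast; linarith)
          · exact hTP _ _ (by norm_num) (by push_cast; linarith)
        · simp [hm2, Prod.ext_iff]; ring
      · refine ⟨?_, ?_⟩
        · intro β hβ
          rw [hm3] at hβ
          simp only [Multiset.insert_eq_cons, Multiset.mem_cons, Multiset.mem_singleton] at hβ
          rcases hβ with rfl | rfl
          · exact hTP _ _ (by norm_num) (by push_cast; linarith)
          · exact hTP _ _ (by norm_num) (by push_cast; linarith)
        · simp [hm3, Prod.ext_iff]; ring
      · refine ⟨?_, ?_⟩
        · intro β hβ
          rw [hm4] at hβ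
          simp only [Multiset.insert_eq_cons, Multiset.mem_cons, Multiset.mem_singleton] at hβ
          rcases hβ with rfl | rfl | rfl
          · exact hTP _ _ (by norm_num) (by push_cast; linarith)
          · exact hTP _ _ (by norm_num) (by push_cast; linarith)
          · exact hTP _ _ (by norm_num) (by push_cast; linarith)
        · simp [hm4, Prod.ext_iff]; ring
      · refine ⟨?_, ?_⟩
        · intro β hβ
          rw [hm5] at hβ
          simp only [Multiset.insert_eq_cons, Multiset.mem_cons, Multiset.mem_singleton] at hβ
          rcases hβ with rfl | rfl
          · exact hTP _ _ (by norm_num) (by push_cast; linarith)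
          · exact hTP _ _ (by norm_num) (by push_cast; linarith)
        · simp [hm5, Prod.ext_iff]; ring
      · refine ⟨?_, ?_⟩
        · intro β hβ
          rw [hm6] at hβ
          simp only [Multiset.insert_eq_cons, Multiset.mem_cons, Multiset.mem_singleton] at hβ
          rcases hβ with rfl | rfl | rfl
          · exact hTP _ _ (by norm_num) (by push_cast; linarith)
          · exact hTP _ _ (by norm_num) (by push_cast; linarith)
          · exact hTP _ _ (by norm_num) (by push_cast; linarith)
        · simp [hm6, Prod.ext_iff]; ring
  have d12 : m1 ≠ m2 := by intro e; simpa [hm1, hm2] using congrArg Multiset.card e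
  have d13 : m1 ≠ m3 := by intro e; simpa [hm1, hm3] using congrArg Multiset.card e
  have d14 : m1 ≠ m4 := by intro e; simpa [hm1, hm4] using congrArg Multiset.card e
  have d15 : m1 ≠ m5 := by intro e; simpa [hm1, hm5] using congrArg Multiset.card e
  have d16 : m1 ≠ m6 := by intro e; simpa [hm1, hm6] using congrArg Multiset.card e
  have d24 : m2 ≠ m4 := by intro e; simpa [hm2, hm4] using congrArg Multiset.card e
  have d26 : m2 ≠ m6 := by intro e; simpa [hm2, hm6] using congrArg Multiset.card e
  have d34 : m3 ≠ m4 := by intro e; simpa [hm3, hm4] using congrArg Multiset.card e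
  have d36 : m3 ≠ m6 := by intro e; simpa [hm3, hm6] using congrArg Multiset.card e
  have d45 : m4 ≠ m5 := by intro e; simpa [hm4, hm5] using congrArg Multiset.card e
  have d56 : m5 ≠ m6 := by intro e; simpa [hm5, hm6] using congrArg Multiset.card e
  have d23 : m2 ≠ m3 := by
    intro e
    have hw : (1, 0) ∈ m3 := e ▸ (by simp [hm2])
    simp [hm3, Prod.ext_iff] at hw
  have d25 : m2 ≠ m5 := by
    intro e
    have hw : (1, 0) ∈ m5 := e ▸ (by simp [hm2])
    simp [hm5, Prod.ext_iff] at hw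
  have d35 : m3 ≠ m5 := by
    intro e
    have hw : (2, 0) ∈ m5 := e ▸ (by simp [hm3])
    simp [hm5, Prod.ext_iff] at hw
  have d46 : m4 ≠ m6 := by
    intro e
    have hw : (2 * c - 1, 2) ∈ m6 := e ▸ (by simp [hm4])
    simp [hm6, Prod.ext_iff] at hw
  have hcard : F.card = 6 := by
    rw [hF]
    rw [Finset.card_insert_of_notMem (by
      simp only [Finset.mem_insert, Finset.mem_singleton]; push_neg
      exact ⟨d12, d13, d14, d15, d16⟩)]
    rw [Finset.card_insert_of_notMem (by
      simp only [Finset.mem_insert, Finset.mem_singleton]; push_neg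
      exact ⟨d23, d24, d25, d26⟩)]
    rw [Finset.card_insert_of_notMem (by
      simp only [Finset.mem_insert, Finset.mem_singleton]; push_neg
      exact ⟨d34, d35, d36⟩)]
    rw [Finset.card_insert_of_notMem (by
      simp only [Finset.mem_insert, Finset.mem_singleton]; push_neg
      exact ⟨d45, d46⟩)]
    rw [Finset.card_insert_of_notMem (by simpa using d56)]
    rfl
  show Nat.card {m : Multiset (ℤ × ℤ) // (∀ β ∈ m, TotPos D β) ∧ m.sum = (2 * c + 1, 2)} = 6
  calc Nat.card {m : Multiset (ℤ × ℤ) // (∀ β ∈ m, TotPos D β) ∧ m.sum = (2 * c + 1, 2)}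
      = ({m : Multiset (ℤ × ℤ) | (∀ β ∈ m, TotPos D β) ∧ m.sum = (2 * c + 1, 2)}).ncard :=
        Nat.card_coe_set_eq _
    _ = (F : Set (Multiset (ℤ × ℤ))).ncard := by rw [hset]
    _ = F.card := Set.ncard_coe_finset F
    _ = 6 := hcard
end

section
/- Let D ≥ 2 be a squarefree integer with D ≠ 5 and K = ℚ(√D), and let α = (⌈2ξ_D⌉ + 2) + 2ω_D. If ⌈ξ_D⌉ − ξ_D < 1/2, then p_K(α) = 9. -/
/-! ### Auxiliary lemmas -/

private lemma sum_fst_nonneg : ∀ (N : Multiset (ℤ × ℤ)), (∀ β ∈ N, 0 ≤ β.1) → 0 ≤ N.sum.1 := by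
  intro N
  induction N using Multiset.induction with
  | empty => intro _; simp
  | cons a s ih =>
    intro h
    rw [Multiset.sum_cons, Prod.fst_add]
    have h1 := h a (Multiset.mem_cons_self a s)
    have h2 := ih fun β hβ => h β (Multiset.mem_cons_of_mem hβ)
    omega

private lemma sum_snd_nonneg : ∀ (N : Multiset (ℤ × ℤ)), (∀ β ∈ N, 0 ≤ β.2) → 0 ≤ N.sum.2 := by
  intro N
  induction N using Multiset.induction with
  | empty => intro _; simp
  | cons a s ih =>
    intro h
    rw [Multiset.sum_cons, Prod.snd_add]
    have h1 := h a (Multiset.mem_cons_self a s)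
    have h2 := ih fun β hβ => h β (Multiset.mem_cons_of_mem hβ)
    omega

private lemma sum_snd_nonpos : ∀ (N : Multiset (ℤ × ℤ)), (∀ β ∈ N, β.2 ≤ 0) → N.sum.2 ≤ 0 := by
  intro N
  induction N using Multiset.induction with
  | empty => intro _; simp
  | cons a s ih =>
    intro h
    rw [Multiset.sum_cons, Prod.snd_add]
    have h1 := h a (Multiset.mem_cons_self a s)
    have h2 := ih fun β hβ => h β (Multiset.mem_cons_of_mem hβ)
    omega

private lemma sum_conj_nonneg (ξ : ℝ) : ∀ (N : Multiset (ℤ × ℤ)),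
    (∀ β ∈ N, 0 < (β.1 : ℝ) - (β.2 : ℝ) * ξ) → 0 ≤ (N.sum.1 : ℝ) - (N.sum.2 : ℝ) * ξ := by
  intro N
  induction N using Multiset.induction with
  | empty => intro _; simp
  | cons a s ih =>
    intro h
    rw [Multiset.sum_cons, Prod.fst_add, Prod.snd_add]
    have h1 := h a (Multiset.mem_cons_self a s)
    have h2 := ih fun β hβ => h β (Multiset.mem_cons_of_mem hβ)
    push_cast
    nlinarith

private lemma erase_sum_fst (N : Multiset (ℤ × ℤ)) (β : ℤ × ℤ) (hβ : β ∈ N) :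
    N.sum.1 = β.1 + (N.erase β).sum.1 := by
  conv_lhs => rw [← Multiset.cons_erase hβ]
  rw [Multiset.sum_cons, Prod.fst_add]

private lemma erase_sum_snd (N : Multiset (ℤ × ℤ)) (β : ℤ × ℤ) (hβ : β ∈ N) :
    N.sum.2 = β.2 + (N.erase β).sum.2 := by
  conv_lhs => rw [← Multiset.cons_erase hβ]
  rw [Multiset.sum_cons, Prod.snd_add]

private lemma classify0 : ∀ (N : Multiset (ℤ × ℤ)),
    (∀ β ∈ N, β.2 = 0 ∧ 1 ≤ β.1) → N.sum.1 ≤ 2 →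
    N = 0 ∨ N = {((1:ℤ),(0:ℤ))} ∨ N = {((2:ℤ),(0:ℤ))} ∨
      N = {((1:ℤ),(0:ℤ)), ((1:ℤ),(0:ℤ))} := by
  intro N
  induction N using Multiset.induction with
  | empty => intro _ _; exact Or.inl rfl
  | cons a s ih =>
    intro h hle
    obtain ⟨ha2, ha1⟩ := h a (Multiset.mem_cons_self a s)
    have hs := fun β hβ => h β (Multiset.mem_cons_of_mem hβ)
    have hfst : (a ::ₘ s).sum.1 = a.1 + s.sum.1 := by
      rw [Multiset.sum_cons, Prod.fst_add]
    have hnn : 0 ≤ s.sum.1 := sum_fst_nonneg s (fun β hβ => by have := (hs β hβ).2; omega)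
    have hle' : s.sum.1 ≤ 2 := by omega
    have hae : a = (a.1, a.2) := rfl
    rcases ih hs hle' with h0 | h0 | h0 | h0
    · -- s = 0
      subst h0
      have hs0 : (0 : Multiset (ℤ × ℤ)).sum.1 = 0 := rfl
      have : a.1 = 1 ∨ a.1 = 2 := by omega
      rcases this with h1 | h1
      · right; left
        rw [hae, h1, ha2]
        rfl
      · right; right; left
        rw [hae, h1, ha2]
        rfl
    · -- s = {(1,0)}
      subst h0
      have hs0 : ({((1:ℤ),(0:ℤ))} : Multiset (ℤ × ℤ)).sum.1 = 1 := by
        rw [Multiset.sum_singleton]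
      have h1 : a.1 = 1 := by omega
      right; right; right
      rw [hae, h1, ha2]
      rfl
    · -- s = {(2,0)} : impossible
      subst h0
      have hs0 : ({((2:ℤ),(0:ℤ))} : Multiset (ℤ × ℤ)).sum.1 = 2 := by
        rw [Multiset.sum_singleton]
      omega
    · -- s = {(1,0),(1,0)} : impossible
      subst h0
      have hs0 : ({((1:ℤ),(0:ℤ)), ((1:ℤ),(0:ℤ))} : Multiset (ℤ × ℤ)).sum.1 = 2 := by
        simp [Multiset.insert_eq_cons]
      omega

theorem nine_partitions (D : ℤ) (hD : 2 ≤ D) (hsf : Squarefree D) (hD5 : D ≠ 5)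
    (h : (⌈xiD D⌉ : ℝ) - xiD D < 1 / 2) :
    pK D (⌈2 * xiD D⌉ + 2, 2) = 9 := by
  have hDR : (2:ℝ) ≤ (D:ℝ) := by exact_mod_cast hD
  have hnsq : ¬ IsSquare D := by
    rintro ⟨r, hr⟩
    have hu : IsUnit r := hsf r ⟨1, by rw [hr, mul_one]⟩
    rw [Int.isUnit_iff] at hu
    rcases hu with rfl | rfl <;> norm_num at hr <;> omega
  have hirr : Irrational (Real.sqrt D) := irrational_sqrt_intCast_iff.mpr ⟨hnsq, by omega⟩
  have hξω : Irrational (xiD D) ∧ 1 < xiD D ∧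
      (omegaD D = xiD D ∨ omegaD D = xiD D + 1) := by
    by_cases h4 : D % 4 = 1
    · have hD9 : D ≠ 9 := by
        rintro rfl
        have := hsf 3 ⟨1, by norm_num⟩
        rw [Int.isUnit_iff] at this
        omega
      have hD13 : (13:ℤ) ≤ D := by omega
      have hξ : xiD D = (Real.sqrt D - 1) / 2 := by
        rw [xiD, omegaD', if_pos h4]; ring
      have hω : omegaD D = xiD D + 1 := by
        rw [omegaD, if_pos h4, hξ]; ring
      have h3 : (3:ℝ) < Real.sqrt D := by
        rw [show (3:ℝ) = Real.sqrt 9 by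
          rw [show (9:ℝ) = 3^2 by norm_num, Real.sqrt_sq (by norm_num : (0:ℝ) ≤ 3)]]
        apply Real.sqrt_lt_sqrt (by norm_num)
        have : (13:ℝ) ≤ (D:ℝ) := by exact_mod_cast hD13
        linarith
      refine ⟨?_, ?_, Or.inr hω⟩
      · rw [hξ]
        have := (hirr.sub_intCast 1).div_intCast (by norm_num : (2:ℤ) ≠ 0)
        simpa using this
      · rw [hξ]; linarith
    · have hξ : xiD D = Real.sqrt D := by
        rw [xiD, omegaD', if_neg h4, neg_neg]
      have hω : omegaD D = xiD D := by
        rw [omegaD, if_neg h4, hξ]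
      refine ⟨hξ ▸ hirr, ?_, Or.inl hω⟩
      rw [hξ]
      have : (1:ℝ) < Real.sqrt D := by
        rw [show (1:ℝ) = Real.sqrt 1 by rw [Real.sqrt_one]]
        apply Real.sqrt_lt_sqrt (by norm_num)
        linarith
      linarith
  obtain ⟨hξirr, hξ1, hωcase⟩ := hξω
  set ξ := xiD D with hξdef
  set ω := omegaD D with hωdef
  set m := ⌈ξ⌉ with hmdef
  have hξm : ξ < (m:ℝ) := lt_of_le_of_ne (Int.le_ceil ξ) (hξirr.ne_int m)
  have hmξ : (m:ℝ) < ξ + 1/2 := by linarith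
  have hm2 : 2 ≤ m := by
    have h1 : (1:ℝ) < (m:ℝ) := lt_trans hξ1 hξm
    have : (1:ℤ) < m := by exact_mod_cast h1
    omega
  have hmR : (2:ℝ) ≤ (m:ℝ) := by exact_mod_cast hm2
  have hξ32 : (3:ℝ)/2 < ξ := by linarith
  have hωξ : ξ ≤ ω := by rcases hωcase with h' | h' <;> rw [h'] <;> linarith
  have hωpos : (0:ℝ) < ω := by linarith
  have hξpos : (0:ℝ) < ξ := by linarith
  have hceil : ⌈2 * ξ⌉ = 2 * m := by
    rw [Int.ceil_eq_iff]
    constructor <;> push_cast <;> linarith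
  rw [hceil]
  have homega' : omegaD' D = -ξ := by rw [hξdef, xiD, neg_neg]
  have hTP : ∀ a : ℤ × ℤ, TotPos D a ↔
      (0 < (a.1:ℝ) + (a.2:ℝ) * ω ∧ 0 < (a.1:ℝ) - (a.2:ℝ) * ξ) := by
    intro a
    rw [TotPos, emb, embConj, homega', ← hωdef]
    have : (a.1:ℝ) + (a.2:ℝ) * (-ξ) = (a.1:ℝ) - (a.2:ℝ) * ξ := by ring
    rw [this]
  -- The main classification
  have key : ∀ N : Multiset (ℤ × ℤ),
      ((∀ β ∈ N, TotPos D β) ∧ N.sum = (2*m+2, 2)) ↔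
      (N = {((2*m+2 : ℤ), (2:ℤ))} ∨ N = {(2*m+1, 2), ((1:ℤ),(0:ℤ))} ∨
       N = {(2*m, 2), ((2:ℤ),(0:ℤ))} ∨ N = {(2*m, 2), ((1:ℤ),(0:ℤ)), ((1:ℤ),(0:ℤ))} ∨
       N = {(m, 1), (m, 1), ((2:ℤ),(0:ℤ))} ∨
       N = {(m, 1), (m, 1), ((1:ℤ),(0:ℤ)), ((1:ℤ),(0:ℤ))} ∨
       N = {(m, 1), (m+1, 1), ((1:ℤ),(0:ℤ))} ∨
       N = {(m, 1), (m+2, 1)} ∨ N = {(m+1, 1), (m+1, 1)}) := by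
    intro N
    constructor
    · rintro ⟨hpos, hsum⟩
      have hconj : ∀ β ∈ N, 0 < (β.1:ℝ) - (β.2:ℝ) * ξ :=
        fun β hβ => ((hTP β).mp (hpos β hβ)).2
      have hemb : ∀ β ∈ N, 0 < (β.1:ℝ) + (β.2:ℝ) * ω :=
        fun β hβ => ((hTP β).mp (hpos β hβ)).1
      have hsf1 : N.sum.1 = 2*m+2 := by rw [hsum]
      have hsf2 : N.sum.2 = 2 := by rw [hsum]
      -- no part has negative second coordinate
      have hy0 : ∀ β ∈ N, 0 ≤ β.2 := by
        intro β hβ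
        by_contra hneg
        push_neg at hneg
        have hb2 : (β.2:ℝ) ≤ -1 := by
          have hb2' : β.2 ≤ (-1:ℤ) := by omega
          exact_mod_cast hb2'
        have hrest : 0 ≤ ((N.erase β).sum.1 : ℝ) - ((N.erase β).sum.2 : ℝ) * ξ :=
          sum_conj_nonneg ξ _ (fun γ hγ => hconj γ (Multiset.mem_of_mem_erase hγ))
        have h1 := erase_sum_fst N β hβ
        have h2 := erase_sum_snd N β hβ
        have he := hemb β hβ
        have p1 : (0:ℝ) ≤ (-(β.2:ℝ) - 1) * ξ := mul_nonneg (by linarith) hξpos.le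
        have p2 : (0:ℝ) ≤ (-(β.2:ℝ) - 1) * ω := mul_nonneg (by linarith) hωpos.le
        have hbig : 2*ξ < (β.1:ℝ) - (β.2:ℝ) * ξ := by nlinarith
        have htot : ((N.sum.1:ℤ):ℝ) - ((N.sum.2:ℤ):ℝ) * ξ < 3 := by
          rw [hsf1, hsf2]; push_cast; linarith
        have hge : (β.1:ℝ) - (β.2:ℝ) * ξ ≤ ((N.sum.1:ℤ):ℝ) - ((N.sum.2:ℤ):ℝ) * ξ := by
          rw [h1, h2]; push_cast; linarith
        linarith
      have hy2 : ∀ β ∈ N, β.2 ≤ 2 := by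
        intro β hβ
        have h2 := erase_sum_snd N β hβ
        have hrest := sum_snd_nonneg (N.erase β)
          (fun γ hγ => hy0 γ (Multiset.mem_of_mem_erase hγ))
        omega
      -- lower bounds on first coordinates
      have hx0 : ∀ β ∈ N, β.2 = 0 → 1 ≤ β.1 := by
        intro β hβ hb
        have hc := hconj β hβ
        rw [hb] at hc
        push_cast at hc
        have : (0:ℝ) < (β.1:ℝ) := by linarith
        have : (0:ℤ) < β.1 := by exact_mod_cast this
        omega
      have hx1 : ∀ β ∈ N, β.2 = 1 → m ≤ β.1 := by
        intro β hβ hb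
        have hc := hconj β hβ
        rw [hb] at hc
        push_cast at hc
        have : ξ ≤ (β.1:ℝ) := by linarith
        exact Int.ceil_le.mpr this
      have hx2 : ∀ β ∈ N, β.2 = 2 → 2*m ≤ β.1 := by
        intro β hβ hb
        have hc := hconj β hβ
        rw [hb] at hc
        push_cast at hc
        have : ((2*m-1 : ℤ):ℝ) < (β.1:ℝ) := by push_cast; linarith
        have : (2*m-1 : ℤ) < β.1 := by exact_mod_cast this
        omega
      -- there is a part with positive second coordinate
      have hex1 : ∃ β ∈ N, 1 ≤ β.2 := by
        by_contra hno
        push_neg at hno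
        have : N.sum.2 ≤ 0 := sum_snd_nonpos N (fun β hβ => by have := hno β hβ; omega)
        omega
      obtain ⟨β1, hβ1N, hβ1y⟩ := hex1
      obtain ⟨x1, y1⟩ := β1
      have hs1 := erase_sum_fst N (x1, y1) hβ1N
      have hs2 := erase_sum_snd N (x1, y1) hβ1N
      have hN1 : N = (x1, y1) ::ₘ N.erase (x1, y1) := (Multiset.cons_erase hβ1N).symm
      have hy1cases : y1 = 1 ∨ y1 = 2 := by
        have := hy2 _ hβ1N
        simp only at this hβ1y
        omega
      rcases hy1cases with rfl | rfl
      · -- y1 = 1 : there are two parts with second coordinate 1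
        have hs2' : (N.erase (x1, 1)).sum.2 = 1 := by simp only at hs2; omega
        have hex2 : ∃ β ∈ N.erase (x1, 1), 1 ≤ β.2 := by
          by_contra hno
          push_neg at hno
          have : (N.erase (x1, 1)).sum.2 ≤ 0 :=
            sum_snd_nonpos _ (fun β hβ => by have := hno β hβ; omega)
          omega
        obtain ⟨β2, hβ2N, hβ2y⟩ := hex2
        obtain ⟨x2, y2⟩ := β2
        have hβ2Nfull : (x2, y2) ∈ N := Multiset.mem_of_mem_erase hβ2N
        have ht2 := erase_sum_snd (N.erase (x1,1)) (x2, y2) hβ2N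
        have ht1 := erase_sum_fst (N.erase (x1,1)) (x2, y2) hβ2N
        have hrest2 := sum_snd_nonneg ((N.erase (x1,1)).erase (x2,y2))
          (fun γ hγ => hy0 γ (Multiset.mem_of_mem_erase (Multiset.mem_of_mem_erase hγ)))
        have hy2e : y2 = 1 := by simp only at ht2 hβ2y; omega
        subst hy2e
        set N2 := (N.erase (x1,1)).erase (x2,1) with hN2def
        have hN2mem : ∀ γ ∈ N2, γ ∈ N :=
          fun γ hγ => Multiset.mem_of_mem_erase (Multiset.mem_of_mem_erase hγ)
        have hsN2 : N2.sum.2 = 0 := by simp only at ht2; omega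
        have hall0 : ∀ β ∈ N2, β.2 = 0 := by
          intro β hβ
          have h0 := hy0 β (hN2mem β hβ)
          by_contra hne0
          have ha := erase_sum_snd N2 β hβ
          have hb := sum_snd_nonneg (N2.erase β)
            (fun γ hγ => hy0 γ (hN2mem γ (Multiset.mem_of_mem_erase hγ)))
          omega
        have hx1b : m ≤ x1 := hx1 _ hβ1N rfl
        have hx2b : m ≤ x2 := hx1 _ hβ2Nfull rfl
        have hN2nn : 0 ≤ N2.sum.1 :=
          sum_fst_nonneg N2 (fun β hβ => by
            have := hx0 β (hN2mem β hβ) (hall0 β hβ); omega)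
        have hsum1 : x1 + x2 + N2.sum.1 = 2*m+2 := by
          simp only at hs1 ht1; omega
        have hle2 : N2.sum.1 ≤ 2 := by omega
        have hNshape : N = (x1,1) ::ₘ (x2,1) ::ₘ N2 := by
          rw [hN1]
          congr 1
          exact (Multiset.cons_erase hβ2N).symm
        have hcls := classify0 N2
          (fun β hβ => ⟨hall0 β hβ, hx0 β (hN2mem β hβ) (hall0 β hβ)⟩) hle2
        rcases hcls with h0 | h0 | h0 | h0
        · -- N2 = 0, x1 + x2 = 2m+2
          rw [h0] at hsum1 hNshape
          have hsum1' : x1 + x2 = 2*m+2 := by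
            have : (0 : Multiset (ℤ × ℤ)).sum.1 = 0 := rfl
            omega
          have hc : (x1 = m ∧ x2 = m+2) ∨ (x1 = m+1 ∧ x2 = m+1) ∨
              (x1 = m+2 ∧ x2 = m) := by omega
          rcases hc with ⟨rfl, rfl⟩ | ⟨rfl, rfl⟩ | ⟨rfl, rfl⟩
          · refine Or.inr (Or.inr (Or.inr (Or.inr (Or.inr (Or.inr (Or.inr (Or.inl ?_)))))))
            rw [hNshape]; rfl
          · refine Or.inr (Or.inr (Or.inr (Or.inr (Or.inr (Or.inr (Or.inr (Or.inr ?_)))))))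
            rw [hNshape]; rfl
          · refine Or.inr (Or.inr (Or.inr (Or.inr (Or.inr (Or.inr (Or.inr (Or.inl ?_)))))))
            rw [hNshape, Multiset.cons_swap]; rfl
        · -- N2 = {(1,0)}, x1 + x2 = 2m+1
          rw [h0] at hsum1 hNshape
          have hsing : ({((1:ℤ),(0:ℤ))} : Multiset (ℤ × ℤ)).sum.1 = 1 := by
            rw [Multiset.sum_singleton]
          have hc : (x1 = m ∧ x2 = m+1) ∨ (x1 = m+1 ∧ x2 = m) := by omega
          rcases hc with ⟨rfl, rfl⟩ | ⟨rfl, rfl⟩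
          · refine Or.inr (Or.inr (Or.inr (Or.inr (Or.inr (Or.inr (Or.inl ?_))))))
            rw [hNshape]; rfl
          · refine Or.inr (Or.inr (Or.inr (Or.inr (Or.inr (Or.inr (Or.inl ?_))))))
            rw [hNshape, Multiset.cons_swap]; rfl
        · -- N2 = {(2,0)}, x1 + x2 = 2m
          rw [h0] at hsum1 hNshape
          have hsing : ({((2:ℤ),(0:ℤ))} : Multiset (ℤ × ℤ)).sum.1 = 2 := by
            rw [Multiset.sum_singleton]
          have hc : x1 = m ∧ x2 = m := by omega
          obtain ⟨rfl, rfl⟩ := hc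
          refine Or.inr (Or.inr (Or.inr (Or.inr (Or.inl ?_))))
          rw [hNshape]; rfl
        · -- N2 = {(1,0),(1,0)}, x1 + x2 = 2m
          rw [h0] at hsum1 hNshape
          have hsing : ({((1:ℤ),(0:ℤ)), ((1:ℤ),(0:ℤ))} : Multiset (ℤ × ℤ)).sum.1 = 2 := by
            simp [Multiset.insert_eq_cons]
          have hc : x1 = m ∧ x2 = m := by omega
          obtain ⟨rfl, rfl⟩ := hc
          refine Or.inr (Or.inr (Or.inr (Or.inr (Or.inr (Or.inl ?_)))))
          rw [hNshape]; rfl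
      · -- y1 = 2
        set N1 := N.erase (x1, 2) with hN1def
        have hN1mem : ∀ γ ∈ N1, γ ∈ N := fun γ hγ => Multiset.mem_of_mem_erase hγ
        have hsN1 : N1.sum.2 = 0 := by simp only at hs2; omega
        have hall0 : ∀ β ∈ N1, β.2 = 0 := by
          intro β hβ
          have h0 := hy0 β (hN1mem β hβ)
          by_contra hne0
          have ha := erase_sum_snd N1 β hβ
          have hb := sum_snd_nonneg (N1.erase β)
            (fun γ hγ => hy0 γ (hN1mem γ (Multiset.mem_of_mem_erase hγ)))
          omega
        have hx1b : 2*m ≤ x1 := hx2 _ hβ1N rfl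
        have hle2 : N1.sum.1 ≤ 2 := by
          have hnn : 0 ≤ N1.sum.1 :=
            sum_fst_nonneg N1 (fun β hβ => by
              have := hx0 β (hN1mem β hβ) (hall0 β hβ); omega)
          simp only at hs1
          omega
        have hcls := classify0 N1
          (fun β hβ => ⟨hall0 β hβ, hx0 β (hN1mem β hβ) (hall0 β hβ)⟩) hle2
        rcases hcls with h0 | h0 | h0 | h0
        · rw [h0] at hs1 hN1
          have hz : (0 : Multiset (ℤ × ℤ)).sum.1 = 0 := rfl
          have hx1v : x1 = 2*m+2 := by simp only at hs1; omega
          subst hx1v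
          exact Or.inl (by rw [hN1]; rfl)
        · rw [h0] at hs1 hN1
          have hz : ({((1:ℤ),(0:ℤ))} : Multiset (ℤ × ℤ)).sum.1 = 1 := by
            rw [Multiset.sum_singleton]
          have hx1v : x1 = 2*m+1 := by simp only at hs1; omega
          subst hx1v
          exact Or.inr (Or.inl (by rw [hN1]; rfl))
        · rw [h0] at hs1 hN1
          have hz : ({((2:ℤ),(0:ℤ))} : Multiset (ℤ × ℤ)).sum.1 = 2 := by
            rw [Multiset.sum_singleton]
          have hx1v : x1 = 2*m := by simp only at hs1; omega
          subst hx1v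
          exact Or.inr (Or.inr (Or.inl (by rw [hN1]; rfl)))
        · rw [h0] at hs1 hN1
          have hz : ({((1:ℤ),(0:ℤ)), ((1:ℤ),(0:ℤ))} : Multiset (ℤ × ℤ)).sum.1 = 2 := by
            simp [Multiset.insert_eq_cons]
          have hx1v : x1 = 2*m := by simp only at hs1; omega
          subst hx1v
          exact Or.inr (Or.inr (Or.inr (Or.inl (by rw [hN1]; rfl))))
    · -- soundness
      intro hN
      have tp : ∀ x y : ℤ, 0 ≤ y → ξ * (y:ℝ) < (x:ℝ) → TotPos D (x, y) := by
        intro x y hy hxy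
        rw [hTP]
        have hyR : (0:ℝ) ≤ (y:ℝ) := by exact_mod_cast hy
        have h1 : (0:ℝ) ≤ (y:ℝ) * ω := mul_nonneg hyR hωpos.le
        have h2 : (0:ℝ) ≤ ξ * (y:ℝ) := mul_nonneg hξpos.le hyR
        constructor
        · simp only
          linarith
        · simp only
          nlinarith
      rcases hN with rfl | rfl | rfl | rfl | rfl | rfl | rfl | rfl | rfl <;>
        refine ⟨?_, ?_⟩ <;>
        first
          | (intro β hβ
             simp only [Multiset.insert_eq_cons, Multiset.mem_cons,
               Multiset.mem_singleton] at hβ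
             rcases hβ with rfl | rfl | rfl | rfl <;>
               (apply tp <;> push_cast <;> first | omega | linarith))
          | (simp [Multiset.insert_eq_cons, Prod.ext_iff]
             try constructor <;> try ring
             try omega)
  -- Count the nine multisets
  have hne : ∀ (N N' : Multiset (ℤ × ℤ)),
      (Multiset.card N, Multiset.count ((1:ℤ),(0:ℤ)) N, Multiset.count ((2:ℤ),(0:ℤ)) N,
        Multiset.count ((m:ℤ),(1:ℤ)) N) ≠
      (Multiset.card N', Multiset.count ((1:ℤ),(0:ℤ)) N', Multiset.count ((2:ℤ),(0:ℤ)) N',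
        Multiset.count ((m:ℤ),(1:ℤ)) N') → N ≠ N' := by
    rintro N N' hfp rfl
    exact hfp rfl
  have c1 : (Multiset.card ({((2*m+2 : ℤ), (2:ℤ))} : Multiset (ℤ × ℤ)), Multiset.count ((1:ℤ),(0:ℤ)) ({((2*m+2 : ℤ), (2:ℤ))} : Multiset (ℤ × ℤ)), Multiset.count ((2:ℤ),(0:ℤ)) ({((2*m+2 : ℤ), (2:ℤ))} : Multiset (ℤ × ℤ)), Multiset.count ((m:ℤ),(1:ℤ)) ({((2*m+2 : ℤ), (2:ℤ))} : Multiset (ℤ × ℤ))) = ((1:ℕ), (0:ℕ), (0:ℕ), (0:ℕ)) := by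
    simp [Multiset.insert_eq_cons, Multiset.count_cons, Multiset.count_singleton]
  have c2 : (Multiset.card ({(2*m+1, 2), ((1:ℤ),(0:ℤ))} : Multiset (ℤ × ℤ)), Multiset.count ((1:ℤ),(0:ℤ)) ({(2*m+1, 2), ((1:ℤ),(0:ℤ))} : Multiset (ℤ × ℤ)), Multiset.count ((2:ℤ),(0:ℤ)) ({(2*m+1, 2), ((1:ℤ),(0:ℤ))} : Multiset (ℤ × ℤ)), Multiset.count ((m:ℤ),(1:ℤ)) ({(2*m+1, 2), ((1:ℤ),(0:ℤ))} : Multiset (ℤ × ℤ))) = ((2:ℕ), (1:ℕ), (0:ℕ), (0:ℕ)) := by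
    simp [Multiset.insert_eq_cons, Multiset.count_cons, Multiset.count_singleton]
  have c3 : (Multiset.card ({(2*m, 2), ((2:ℤ),(0:ℤ))} : Multiset (ℤ × ℤ)), Multiset.count ((1:ℤ),(0:ℤ)) ({(2*m, 2), ((2:ℤ),(0:ℤ))} : Multiset (ℤ × ℤ)), Multiset.count ((2:ℤ),(0:ℤ)) ({(2*m, 2), ((2:ℤ),(0:ℤ))} : Multiset (ℤ × ℤ)), Multiset.count ((m:ℤ),(1:ℤ)) ({(2*m, 2), ((2:ℤ),(0:ℤ))} : Multiset (ℤ × ℤ))) = ((2:ℕ), (0:ℕ), (1:ℕ), (0:ℕ)) := by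
    simp [Multiset.insert_eq_cons, Multiset.count_cons, Multiset.count_singleton]
  have c4 : (Multiset.card ({(2*m, 2), ((1:ℤ),(0:ℤ)), ((1:ℤ),(0:ℤ))} : Multiset (ℤ × ℤ)), Multiset.count ((1:ℤ),(0:ℤ)) ({(2*m, 2), ((1:ℤ),(0:ℤ)), ((1:ℤ),(0:ℤ))} : Multiset (ℤ × ℤ)), Multiset.count ((2:ℤ),(0:ℤ)) ({(2*m, 2), ((1:ℤ),(0:ℤ)), ((1:ℤ),(0:ℤ))} : Multiset (ℤ × ℤ)), Multiset.count ((m:ℤ),(1:ℤ)) ({(2*m, 2), ((1:ℤ),(0:ℤ)), ((1:ℤ),(0:ℤ))} : Multiset (ℤ × ℤ))) = ((3:ℕ), (2:ℕ), (0:ℕ), (0:ℕ)) := by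
    simp [Multiset.insert_eq_cons, Multiset.count_cons, Multiset.count_singleton]
  have c5 : (Multiset.card ({(m, 1), (m, 1), ((2:ℤ),(0:ℤ))} : Multiset (ℤ × ℤ)), Multiset.count ((1:ℤ),(0:ℤ)) ({(m, 1), (m, 1), ((2:ℤ),(0:ℤ))} : Multiset (ℤ × ℤ)), Multiset.count ((2:ℤ),(0:ℤ)) ({(m, 1), (m, 1), ((2:ℤ),(0:ℤ))} : Multiset (ℤ × ℤ)), Multiset.count ((m:ℤ),(1:ℤ)) ({(m, 1), (m, 1), ((2:ℤ),(0:ℤ))} : Multiset (ℤ × ℤ))) = ((3:ℕ), (0:ℕ), (1:ℕ), (2:ℕ)) := by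
    simp [Multiset.insert_eq_cons, Multiset.count_cons, Multiset.count_singleton]
  have c6 : (Multiset.card ({(m, 1), (m, 1), ((1:ℤ),(0:ℤ)), ((1:ℤ),(0:ℤ))} : Multiset (ℤ × ℤ)), Multiset.count ((1:ℤ),(0:ℤ)) ({(m, 1), (m, 1), ((1:ℤ),(0:ℤ)), ((1:ℤ),(0:ℤ))} : Multiset (ℤ × ℤ)), Multiset.count ((2:ℤ),(0:ℤ)) ({(m, 1), (m, 1), ((1:ℤ),(0:ℤ)), ((1:ℤ),(0:ℤ))} : Multiset (ℤ × ℤ)), Multiset.count ((m:ℤ),(1:ℤ)) ({(m, 1), (m, 1), ((1:ℤ),(0:ℤ)), ((1:ℤ),(0:ℤ))} : Multiset (ℤ × ℤ))) = ((4:ℕ), (2:ℕ), (0:ℕ), (2:ℕ)) := by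
    simp [Multiset.insert_eq_cons, Multiset.count_cons, Multiset.count_singleton]
  have c7 : (Multiset.card ({(m, 1), (m+1, 1), ((1:ℤ),(0:ℤ))} : Multiset (ℤ × ℤ)), Multiset.count ((1:ℤ),(0:ℤ)) ({(m, 1), (m+1, 1), ((1:ℤ),(0:ℤ))} : Multiset (ℤ × ℤ)), Multiset.count ((2:ℤ),(0:ℤ)) ({(m, 1), (m+1, 1), ((1:ℤ),(0:ℤ))} : Multiset (ℤ × ℤ)), Multiset.count ((m:ℤ),(1:ℤ)) ({(m, 1), (m+1, 1), ((1:ℤ),(0:ℤ))} : Multiset (ℤ × ℤ))) = ((3:ℕ), (1:ℕ), (0:ℕ), (1:ℕ)) := by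
    simp [Multiset.insert_eq_cons, Multiset.count_cons, Multiset.count_singleton]
  have c8 : (Multiset.card ({(m, 1), (m+2, 1)} : Multiset (ℤ × ℤ)), Multiset.count ((1:ℤ),(0:ℤ)) ({(m, 1), (m+2, 1)} : Multiset (ℤ × ℤ)), Multiset.count ((2:ℤ),(0:ℤ)) ({(m, 1), (m+2, 1)} : Multiset (ℤ × ℤ)), Multiset.count ((m:ℤ),(1:ℤ)) ({(m, 1), (m+2, 1)} : Multiset (ℤ × ℤ))) = ((2:ℕ), (0:ℕ), (0:ℕ), (1:ℕ)) := by
    simp [Multiset.insert_eq_cons, Multiset.count_cons, Multiset.count_singleton]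
  have c9 : (Multiset.card ({(m+1, 1), (m+1, 1)} : Multiset (ℤ × ℤ)), Multiset.count ((1:ℤ),(0:ℤ)) ({(m+1, 1), (m+1, 1)} : Multiset (ℤ × ℤ)), Multiset.count ((2:ℤ),(0:ℤ)) ({(m+1, 1), (m+1, 1)} : Multiset (ℤ × ℤ)), Multiset.count ((m:ℤ),(1:ℤ)) ({(m+1, 1), (m+1, 1)} : Multiset (ℤ × ℤ))) = ((2:ℕ), (0:ℕ), (0:ℕ), (0:ℕ)) := by
    simp [Multiset.insert_eq_cons, Multiset.count_cons, Multiset.count_singleton]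
  have ne12 : ({((2*m+2 : ℤ), (2:ℤ))} : Multiset (ℤ × ℤ)) ≠ ({(2*m+1, 2), ((1:ℤ),(0:ℤ))} : Multiset (ℤ × ℤ)) := hne _ _ (by rw [c1, c2]; decide)
  have ne13 : ({((2*m+2 : ℤ), (2:ℤ))} : Multiset (ℤ × ℤ)) ≠ ({(2*m, 2), ((2:ℤ),(0:ℤ))} : Multiset (ℤ × ℤ)) := hne _ _ (by rw [c1, c3]; decide)
  have ne14 : ({((2*m+2 : ℤ), (2:ℤ))} : Multiset (ℤ × ℤ)) ≠ ({(2*m, 2), ((1:ℤ),(0:ℤ)), ((1:ℤ),(0:ℤ))} : Multiset (ℤ × ℤ)) := hne _ _ (by rw [c1, c4]; decide)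
  have ne15 : ({((2*m+2 : ℤ), (2:ℤ))} : Multiset (ℤ × ℤ)) ≠ ({(m, 1), (m, 1), ((2:ℤ),(0:ℤ))} : Multiset (ℤ × ℤ)) := hne _ _ (by rw [c1, c5]; decide)
  have ne16 : ({((2*m+2 : ℤ), (2:ℤ))} : Multiset (ℤ × ℤ)) ≠ ({(m, 1), (m, 1), ((1:ℤ),(0:ℤ)), ((1:ℤ),(0:ℤ))} : Multiset (ℤ × ℤ)) := hne _ _ (by rw [c1, c6]; decide)
  have ne17 : ({((2*m+2 : ℤ), (2:ℤ))} : Multiset (ℤ × ℤ)) ≠ ({(m, 1), (m+1, 1), ((1:ℤ),(0:ℤ))} : Multiset (ℤ × ℤ)) := hne _ _ (by rw [c1, c7]; decide)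
  have ne18 : ({((2*m+2 : ℤ), (2:ℤ))} : Multiset (ℤ × ℤ)) ≠ ({(m, 1), (m+2, 1)} : Multiset (ℤ × ℤ)) := hne _ _ (by rw [c1, c8]; decide)
  have ne19 : ({((2*m+2 : ℤ), (2:ℤ))} : Multiset (ℤ × ℤ)) ≠ ({(m+1, 1), (m+1, 1)} : Multiset (ℤ × ℤ)) := hne _ _ (by rw [c1, c9]; decide)
  have ne23 : ({(2*m+1, 2), ((1:ℤ),(0:ℤ))} : Multiset (ℤ × ℤ)) ≠ ({(2*m, 2), ((2:ℤ),(0:ℤ))} : Multiset (ℤ × ℤ)) := hne _ _ (by rw [c2, c3]; decide)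
  have ne24 : ({(2*m+1, 2), ((1:ℤ),(0:ℤ))} : Multiset (ℤ × ℤ)) ≠ ({(2*m, 2), ((1:ℤ),(0:ℤ)), ((1:ℤ),(0:ℤ))} : Multiset (ℤ × ℤ)) := hne _ _ (by rw [c2, c4]; decide)
  have ne25 : ({(2*m+1, 2), ((1:ℤ),(0:ℤ))} : Multiset (ℤ × ℤ)) ≠ ({(m, 1), (m, 1), ((2:ℤ),(0:ℤ))} : Multiset (ℤ × ℤ)) := hne _ _ (by rw [c2, c5]; decide)
  have ne26 : ({(2*m+1, 2), ((1:ℤ),(0:ℤ))} : Multiset (ℤ × ℤ)) ≠ ({(m, 1), (m, 1), ((1:ℤ),(0:ℤ)), ((1:ℤ),(0:ℤ))} : Multiset (ℤ × ℤ)) := hne _ _ (by rw [c2, c6]; decide)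
  have ne27 : ({(2*m+1, 2), ((1:ℤ),(0:ℤ))} : Multiset (ℤ × ℤ)) ≠ ({(m, 1), (m+1, 1), ((1:ℤ),(0:ℤ))} : Multiset (ℤ × ℤ)) := hne _ _ (by rw [c2, c7]; decide)
  have ne28 : ({(2*m+1, 2), ((1:ℤ),(0:ℤ))} : Multiset (ℤ × ℤ)) ≠ ({(m, 1), (m+2, 1)} : Multiset (ℤ × ℤ)) := hne _ _ (by rw [c2, c8]; decide)
  have ne29 : ({(2*m+1, 2), ((1:ℤ),(0:ℤ))} : Multiset (ℤ × ℤ)) ≠ ({(m+1, 1), (m+1, 1)} : Multiset (ℤ × ℤ)) := hne _ _ (by rw [c2, c9]; decide)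
  have ne34 : ({(2*m, 2), ((2:ℤ),(0:ℤ))} : Multiset (ℤ × ℤ)) ≠ ({(2*m, 2), ((1:ℤ),(0:ℤ)), ((1:ℤ),(0:ℤ))} : Multiset (ℤ × ℤ)) := hne _ _ (by rw [c3, c4]; decide)
  have ne35 : ({(2*m, 2), ((2:ℤ),(0:ℤ))} : Multiset (ℤ × ℤ)) ≠ ({(m, 1), (m, 1), ((2:ℤ),(0:ℤ))} : Multiset (ℤ × ℤ)) := hne _ _ (by rw [c3, c5]; decide)
  have ne36 : ({(2*m, 2), ((2:ℤ),(0:ℤ))} : Multiset (ℤ × ℤ)) ≠ ({(m, 1), (m, 1), ((1:ℤ),(0:ℤ)), ((1:ℤ),(0:ℤ))} : Multiset (ℤ × ℤ)) := hne _ _ (by rw [c3, c6]; decide)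
  have ne37 : ({(2*m, 2), ((2:ℤ),(0:ℤ))} : Multiset (ℤ × ℤ)) ≠ ({(m, 1), (m+1, 1), ((1:ℤ),(0:ℤ))} : Multiset (ℤ × ℤ)) := hne _ _ (by rw [c3, c7]; decide)
  have ne38 : ({(2*m, 2), ((2:ℤ),(0:ℤ))} : Multiset (ℤ × ℤ)) ≠ ({(m, 1), (m+2, 1)} : Multiset (ℤ × ℤ)) := hne _ _ (by rw [c3, c8]; decide)
  have ne39 : ({(2*m, 2), ((2:ℤ),(0:ℤ))} : Multiset (ℤ × ℤ)) ≠ ({(m+1, 1), (m+1, 1)} : Multiset (ℤ × ℤ)) := hne _ _ (by rw [c3, c9]; decide)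
  have ne45 : ({(2*m, 2), ((1:ℤ),(0:ℤ)), ((1:ℤ),(0:ℤ))} : Multiset (ℤ × ℤ)) ≠ ({(m, 1), (m, 1), ((2:ℤ),(0:ℤ))} : Multiset (ℤ × ℤ)) := hne _ _ (by rw [c4, c5]; decide)
  have ne46 : ({(2*m, 2), ((1:ℤ),(0:ℤ)), ((1:ℤ),(0:ℤ))} : Multiset (ℤ × ℤ)) ≠ ({(m, 1), (m, 1), ((1:ℤ),(0:ℤ)), ((1:ℤ),(0:ℤ))} : Multiset (ℤ × ℤ)) := hne _ _ (by rw [c4, c6]; decide)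
  have ne47 : ({(2*m, 2), ((1:ℤ),(0:ℤ)), ((1:ℤ),(0:ℤ))} : Multiset (ℤ × ℤ)) ≠ ({(m, 1), (m+1, 1), ((1:ℤ),(0:ℤ))} : Multiset (ℤ × ℤ)) := hne _ _ (by rw [c4, c7]; decide)
  have ne48 : ({(2*m, 2), ((1:ℤ),(0:ℤ)), ((1:ℤ),(0:ℤ))} : Multiset (ℤ × ℤ)) ≠ ({(m, 1), (m+2, 1)} : Multiset (ℤ × ℤ)) := hne _ _ (by rw [c4, c8]; decide)
  have ne49 : ({(2*m, 2), ((1:ℤ),(0:ℤ)), ((1:ℤ),(0:ℤ))} : Multiset (ℤ × ℤ)) ≠ ({(m+1, 1), (m+1, 1)} : Multiset (ℤ × ℤ)) := hne _ _ (by rw [c4, c9]; decide)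
  have ne56 : ({(m, 1), (m, 1), ((2:ℤ),(0:ℤ))} : Multiset (ℤ × ℤ)) ≠ ({(m, 1), (m, 1), ((1:ℤ),(0:ℤ)), ((1:ℤ),(0:ℤ))} : Multiset (ℤ × ℤ)) := hne _ _ (by rw [c5, c6]; decide)
  have ne57 : ({(m, 1), (m, 1), ((2:ℤ),(0:ℤ))} : Multiset (ℤ × ℤ)) ≠ ({(m, 1), (m+1, 1), ((1:ℤ),(0:ℤ))} : Multiset (ℤ × ℤ)) := hne _ _ (by rw [c5, c7]; decide)
  have ne58 : ({(m, 1), (m, 1), ((2:ℤ),(0:ℤ))} : Multiset (ℤ × ℤ)) ≠ ({(m, 1), (m+2, 1)} : Multiset (ℤ × ℤ)) := hne _ _ (by rw [c5, c8]; decide)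
  have ne59 : ({(m, 1), (m, 1), ((2:ℤ),(0:ℤ))} : Multiset (ℤ × ℤ)) ≠ ({(m+1, 1), (m+1, 1)} : Multiset (ℤ × ℤ)) := hne _ _ (by rw [c5, c9]; decide)
  have ne67 : ({(m, 1), (m, 1), ((1:ℤ),(0:ℤ)), ((1:ℤ),(0:ℤ))} : Multiset (ℤ × ℤ)) ≠ ({(m, 1), (m+1, 1), ((1:ℤ),(0:ℤ))} : Multiset (ℤ × ℤ)) := hne _ _ (by rw [c6, c7]; decide)
  have ne68 : ({(m, 1), (m, 1), ((1:ℤ),(0:ℤ)), ((1:ℤ),(0:ℤ))} : Multiset (ℤ × ℤ)) ≠ ({(m, 1), (m+2, 1)} : Multiset (ℤ × ℤ)) := hne _ _ (by rw [c6, c8]; decide)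
  have ne69 : ({(m, 1), (m, 1), ((1:ℤ),(0:ℤ)), ((1:ℤ),(0:ℤ))} : Multiset (ℤ × ℤ)) ≠ ({(m+1, 1), (m+1, 1)} : Multiset (ℤ × ℤ)) := hne _ _ (by rw [c6, c9]; decide)
  have ne78 : ({(m, 1), (m+1, 1), ((1:ℤ),(0:ℤ))} : Multiset (ℤ × ℤ)) ≠ ({(m, 1), (m+2, 1)} : Multiset (ℤ × ℤ)) := hne _ _ (by rw [c7, c8]; decide)
  have ne79 : ({(m, 1), (m+1, 1), ((1:ℤ),(0:ℤ))} : Multiset (ℤ × ℤ)) ≠ ({(m+1, 1), (m+1, 1)} : Multiset (ℤ × ℤ)) := hne _ _ (by rw [c7, c9]; decide)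
  have ne89 : ({(m, 1), (m+2, 1)} : Multiset (ℤ × ℤ)) ≠ ({(m+1, 1), (m+1, 1)} : Multiset (ℤ × ℤ)) := hne _ _ (by rw [c8, c9]; decide)
  have h9 : ({({(m+1, 1), (m+1, 1)} : Multiset (ℤ × ℤ))} : Finset (Multiset (ℤ × ℤ))).card = 1 := Finset.card_singleton _
  have h8 : ({({(m, 1), (m+2, 1)} : Multiset (ℤ × ℤ)), ({(m+1, 1), (m+1, 1)} : Multiset (ℤ × ℤ))} : Finset (Multiset (ℤ × ℤ))).card = 2 := by
    rw [Finset.card_insert_of_notMem (by simp only [Finset.mem_singleton]; exact ne89), h9]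
  have h7 : ({({(m, 1), (m+1, 1), ((1:ℤ),(0:ℤ))} : Multiset (ℤ × ℤ)), ({(m, 1), (m+2, 1)} : Multiset (ℤ × ℤ)), ({(m+1, 1), (m+1, 1)} : Multiset (ℤ × ℤ))} : Finset (Multiset (ℤ × ℤ))).card = 3 := by
    rw [Finset.card_insert_of_notMem (by simp only [Finset.mem_insert, Finset.mem_singleton]; push_neg; exact ⟨ne78, ne79⟩), h8]
  have h6 : ({({(m, 1), (m, 1), ((1:ℤ),(0:ℤ)), ((1:ℤ),(0:ℤ))} : Multiset (ℤ × ℤ)), ({(m, 1), (m+1, 1), ((1:ℤ),(0:ℤ))} : Multiset (ℤ × ℤ)), ({(m, 1), (m+2, 1)} : Multiset (ℤ × ℤ)), ({(m+1, 1), (m+1, 1)} : Multiset (ℤ × ℤ))} : Finset (Multiset (ℤ × ℤ))).card = 4 := by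
    rw [Finset.card_insert_of_notMem (by simp only [Finset.mem_insert, Finset.mem_singleton]; push_neg; exact ⟨ne67, ne68, ne69⟩), h7]
  have h5 : ({({(m, 1), (m, 1), ((2:ℤ),(0:ℤ))} : Multiset (ℤ × ℤ)), ({(m, 1), (m, 1), ((1:ℤ),(0:ℤ)), ((1:ℤ),(0:ℤ))} : Multiset (ℤ × ℤ)), ({(m, 1), (m+1, 1), ((1:ℤ),(0:ℤ))} : Multiset (ℤ × ℤ)), ({(m, 1), (m+2, 1)} : Multiset (ℤ × ℤ)), ({(m+1, 1), (m+1, 1)} : Multiset (ℤ × ℤ))} : Finset (Multiset (ℤ × ℤ))).card = 5 := by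
    rw [Finset.card_insert_of_notMem (by simp only [Finset.mem_insert, Finset.mem_singleton]; push_neg; exact ⟨ne56, ne57, ne58, ne59⟩), h6]
  have h4 : ({({(2*m, 2), ((1:ℤ),(0:ℤ)), ((1:ℤ),(0:ℤ))} : Multiset (ℤ × ℤ)), ({(m, 1), (m, 1), ((2:ℤ),(0:ℤ))} : Multiset (ℤ × ℤ)), ({(m, 1), (m, 1), ((1:ℤ),(0:ℤ)), ((1:ℤ),(0:ℤ))} : Multiset (ℤ × ℤ)), ({(m, 1), (m+1, 1), ((1:ℤ),(0:ℤ))} : Multiset (ℤ × ℤ)), ({(m, 1), (m+2, 1)} : Multiset (ℤ × ℤ)), ({(m+1, 1), (m+1, 1)} : Multiset (ℤ × ℤ))} : Finset (Multiset (ℤ × ℤ))).card = 6 := by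
    rw [Finset.card_insert_of_notMem (by simp only [Finset.mem_insert, Finset.mem_singleton]; push_neg; exact ⟨ne45, ne46, ne47, ne48, ne49⟩), h5]
  have h3 : ({({(2*m, 2), ((2:ℤ),(0:ℤ))} : Multiset (ℤ × ℤ)), ({(2*m, 2), ((1:ℤ),(0:ℤ)), ((1:ℤ),(0:ℤ))} : Multiset (ℤ × ℤ)), ({(m, 1), (m, 1), ((2:ℤ),(0:ℤ))} : Multiset (ℤ × ℤ)), ({(m, 1), (m, 1), ((1:ℤ),(0:ℤ)), ((1:ℤ),(0:ℤ))} : Multiset (ℤ × ℤ)), ({(m, 1), (m+1, 1), ((1:ℤ),(0:ℤ))} : Multiset (ℤ × ℤ)), ({(m, 1), (m+2, 1)} : Multiset (ℤ × ℤ)), ({(m+1, 1), (m+1, 1)} : Multiset (ℤ × ℤ))} : Finset (Multiset (ℤ × ℤ))).card = 7 := by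
    rw [Finset.card_insert_of_notMem (by simp only [Finset.mem_insert, Finset.mem_singleton]; push_neg; exact ⟨ne34, ne35, ne36, ne37, ne38, ne39⟩), h4]
  have h2 : ({({(2*m+1, 2), ((1:ℤ),(0:ℤ))} : Multiset (ℤ × ℤ)), ({(2*m, 2), ((2:ℤ),(0:ℤ))} : Multiset (ℤ × ℤ)), ({(2*m, 2), ((1:ℤ),(0:ℤ)), ((1:ℤ),(0:ℤ))} : Multiset (ℤ × ℤ)), ({(m, 1), (m, 1), ((2:ℤ),(0:ℤ))} : Multiset (ℤ × ℤ)), ({(m, 1), (m, 1), ((1:ℤ),(0:ℤ)), ((1:ℤ),(0:ℤ))} : Multiset (ℤ × ℤ)), ({(m, 1), (m+1, 1), ((1:ℤ),(0:ℤ))} : Multiset (ℤ × ℤ)), ({(m, 1), (m+2, 1)} : Multiset (ℤ × ℤ)), ({(m+1, 1), (m+1, 1)} : Multiset (ℤ × ℤ))} : Finset (Multiset (ℤ × ℤ))).card = 8 := by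
    rw [Finset.card_insert_of_notMem (by simp only [Finset.mem_insert, Finset.mem_singleton]; push_neg; exact ⟨ne23, ne24, ne25, ne26, ne27, ne28, ne29⟩), h3]
  have h1 : ({({((2*m+2 : ℤ), (2:ℤ))} : Multiset (ℤ × ℤ)), ({(2*m+1, 2), ((1:ℤ),(0:ℤ))} : Multiset (ℤ × ℤ)), ({(2*m, 2), ((2:ℤ),(0:ℤ))} : Multiset (ℤ × ℤ)), ({(2*m, 2), ((1:ℤ),(0:ℤ)), ((1:ℤ),(0:ℤ))} : Multiset (ℤ × ℤ)), ({(m, 1), (m, 1), ((2:ℤ),(0:ℤ))} : Multiset (ℤ × ℤ)), ({(m, 1), (m, 1), ((1:ℤ),(0:ℤ)), ((1:ℤ),(0:ℤ))} : Multiset (ℤ × ℤ)), ({(m, 1), (m+1, 1), ((1:ℤ),(0:ℤ))} : Multiset (ℤ × ℤ)), ({(m, 1), (m+2, 1)} : Multiset (ℤ × ℤ)), ({(m+1, 1), (m+1, 1)} : Multiset (ℤ × ℤ))} : Finset (Multiset (ℤ × ℤ))).card = 9 := by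
    rw [Finset.card_insert_of_notMem (by simp only [Finset.mem_insert, Finset.mem_singleton]; push_neg; exact ⟨ne12, ne13, ne14, ne15, ne16, ne17, ne18, ne19⟩), h2]
  rw [pK]
  have e1 : {N : Multiset (ℤ × ℤ) // (∀ β ∈ N, TotPos D β) ∧ N.sum = (2*m+2, 2)} ≃
      {N // N ∈ ({({((2*m+2 : ℤ), (2:ℤ))} : Multiset (ℤ × ℤ)), ({(2*m+1, 2), ((1:ℤ),(0:ℤ))} : Multiset (ℤ × ℤ)), ({(2*m, 2), ((2:ℤ),(0:ℤ))} : Multiset (ℤ × ℤ)), ({(2*m, 2), ((1:ℤ),(0:ℤ)), ((1:ℤ),(0:ℤ))} : Multiset (ℤ × ℤ)), ({(m, 1), (m, 1), ((2:ℤ),(0:ℤ))} : Multiset (ℤ × ℤ)), ({(m, 1), (m, 1), ((1:ℤ),(0:ℤ)), ((1:ℤ),(0:ℤ))} : Multiset (ℤ × ℤ)), ({(m, 1), (m+1, 1), ((1:ℤ),(0:ℤ))} : Multiset (ℤ × ℤ)), ({(m, 1), (m+2, 1)} : Multiset (ℤ × ℤ)), ({(m+1, 1), (m+1, 1)} : Multiset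 (ℤ × ℤ))} : Finset (Multiset (ℤ × ℤ)))} :=
    Equiv.subtypeEquivRight (fun N =>
      (key N).trans (Iff.symm (by simp only [Finset.mem_insert, Finset.mem_singleton])))
  rw [Nat.card_congr e1, Nat.card_eq_finsetCard, h1]
end

section
/- For every n ∈ ℤ≥1 there exists a bound D_n > 0 such that for every squarefree integer D > D_n, the field K = ℚ(√D) satisfies p_K(n) = p(n). -/
lemma emb_sum (D : ℤ) (m : Multiset (ℤ × ℤ)) : emb D m.sum = (m.map (emb D)).sum := by
  induction m using Multiset.induction_on with
  | empty => simp [emb]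
  | cons a s ih =>
    simp only [Multiset.sum_cons, Multiset.map_cons]
    rw [← ih]
    simp only [emb, Prod.fst_add, Prod.snd_add]
    push_cast
    ring

lemma embConj_sum (D : ℤ) (m : Multiset (ℤ × ℤ)) : embConj D m.sum = (m.map (embConj D)).sum := by
  induction m using Multiset.induction_on with
  | empty => simp [embConj]
  | cons a s ih =>
    simp only [Multiset.sum_cons, Multiset.map_cons]
    rw [← ih]
    simp only [embConj, Prod.fst_add, Prod.snd_add]
    push_cast
    ring

lemma sum_fst' (m : Multiset (ℤ × ℤ)) : (m.map Prod.fst).sum = m.sum.1 := by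
  induction m using Multiset.induction_on with
  | empty => simp
  | cons a s ih => simp [ih]

lemma sum_snd' (m : Multiset (ℤ × ℤ)) : (m.map Prod.snd).sum = m.sum.2 := by
  induction m using Multiset.induction_on with
  | empty => simp
  | cons a s ih => simp [ih]

lemma cast_sum' (s : Multiset ℕ) : ((s.sum : ℕ) : ℤ) = (s.map (fun k : ℕ => (k : ℤ))).sum := by
  induction s using Multiset.induction_on with
  | empty => simp
  | cons a t ih => simp [ih]

theorem pK_eq_p_for_large_D (n : ℕ) (hn : 1 ≤ n) :
    ∃ Dn : ℤ, 0 < Dn ∧ ∀ D : ℤ, Squarefree D → Dn < D →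
      pK D ((n : ℤ), 0) = Fintype.card (Nat.Partition n) := by
  refine ⟨(n : ℤ) ^ 2 + 1, by positivity, ?_⟩
  intro D _ hD
  have hD0 : (0 : ℝ) < (D : ℝ) := by
    have : (0 : ℤ) < D := lt_trans (by positivity) hD
    exact_mod_cast this
  have hDn : ((n : ℝ)) ^ 2 < (D : ℝ) := by
    have : ((n : ℤ) ^ 2 + 1 : ℤ) < D := hD
    have := (Int.cast_lt (R := ℝ)).2 this
    push_cast at this
    linarith
  have hsqnn : 0 ≤ Real.sqrt D := Real.sqrt_nonneg _
  have hsqsq : Real.sqrt D ^ 2 = (D : ℝ) := Real.sq_sqrt hD0.le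
  have hsq : (n : ℝ) < Real.sqrt D := by nlinarith [Nat.cast_nonneg (α := ℝ) n]
  have h1 : (1 : ℝ) < Real.sqrt D := by
    have : (1 : ℝ) ≤ (n : ℝ) := by exact_mod_cast hn
    linarith
  have hω : 0 < omegaD D := by unfold omegaD; split <;> linarith
  have hω' : omegaD' D < 0 := by unfold omegaD'; split <;> linarith
  have hdiff : Real.sqrt D ≤ omegaD D - omegaD' D := by
    unfold omegaD omegaD'; split <;> [linarith; linarith]
  have key : ∀ m : Multiset (ℤ × ℤ), (∀ β ∈ m, TotPos D β) → m.sum = ((n : ℤ), 0) →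
      ∀ a ∈ m, a.2 = 0 ∧ 0 < a.1 := by
    intro m hpos hsum a ha
    have hle : emb D a ≤ (n : ℝ) := by
      have h0 : ∀ x ∈ m.map (emb D), (0 : ℝ) ≤ x := by
        intro x hx
        obtain ⟨b, hb, rfl⟩ := Multiset.mem_map.1 hx
        exact le_of_lt (hpos b hb).1
      have := Multiset.single_le_sum h0 (emb D a) (Multiset.mem_map_of_mem _ ha)
      rw [← emb_sum, hsum] at this
      simpa [emb] using this
    have hleC : embConj D a ≤ (n : ℝ) := by
      have h0 : ∀ x ∈ m.map (embConj D), (0 : ℝ) ≤ x := by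
        intro x hx
        obtain ⟨b, hb, rfl⟩ := Multiset.mem_map.1 hx
        exact le_of_lt (hpos b hb).2
      have := Multiset.single_le_sum h0 (embConj D a) (Multiset.mem_map_of_mem _ ha)
      rw [← embConj_sum, hsum] at this
      simpa [embConj] using this
    obtain ⟨hpe, hpc⟩ := hpos a ha
    have hy : a.2 = 0 := by
      by_contra hy
      rcases lt_or_gt_of_ne hy with hneg | hposy
      · have hy1 : (a.2 : ℝ) ≤ -1 := by
          have : a.2 ≤ -1 := by omega
          exact_mod_cast this
        have hx : (a.1 : ℝ) > omegaD D := by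
          have h2 := hpe; unfold emb at h2
          nlinarith
        have : embConj D a > Real.sqrt D := by
          unfold embConj
          have hyc : (a.2 : ℝ) * omegaD' D ≥ -omegaD' D := by nlinarith
          linarith
        linarith
      · have hy1 : (1 : ℝ) ≤ (a.2 : ℝ) := by exact_mod_cast hposy
        have hx : (a.1 : ℝ) > -omegaD' D := by
          have h2 := hpc; unfold embConj at h2
          nlinarith
        have : emb D a > Real.sqrt D := by
          unfold emb
          have : (a.2 : ℝ) * omegaD D ≥ omegaD D := by nlinarith
          linarith
        linarith
    refine ⟨hy, ?_⟩
    have h2 := hpe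
    unfold emb at h2
    rw [hy] at h2
    simp at h2
    exact_mod_cast h2
  have e : {m : Multiset (ℤ × ℤ) // (∀ β ∈ m, TotPos D β) ∧ m.sum = ((n : ℤ), 0)} ≃
      Nat.Partition n := by
    refine
      { toFun := fun m => ⟨m.1.map (fun a : ℤ × ℤ => a.1.toNat), ?_, ?_⟩
        invFun := fun P => ⟨P.parts.map (fun k : ℕ => (((k : ℤ)), (0 : ℤ))), ?_, ?_⟩
        left_inv := ?_
        right_inv := ?_ }
    · intro i hi
      obtain ⟨a, ha, rfl⟩ := Multiset.mem_map.1 hi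
      have := (key m.1 m.2.1 m.2.2 a ha).2
      omega
    · obtain ⟨m, hpos, hsum⟩ := m
      have h1' : (((m.map (fun a : ℤ × ℤ => a.1.toNat)).sum : ℕ) : ℤ) = (n : ℤ) := by
        rw [cast_sum', Multiset.map_map]
        rw [show m.map ((fun k : ℕ => (k : ℤ)) ∘ (fun a : ℤ × ℤ => a.1.toNat)) =
            m.map Prod.fst from Multiset.map_congr rfl (fun a ha => by
              have := (key m hpos hsum a ha).2
              simp only [Function.comp_apply]
              omega)]
        rw [sum_fst', hsum]
      exact_mod_cast h1'
    · intro β hβ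
      obtain ⟨k, hk, rfl⟩ := Multiset.mem_map.1 hβ
      have hk0 : 0 < k := P.parts_pos hk
      have hk0' : (0 : ℝ) < (k : ℝ) := by exact_mod_cast hk0
      constructor
      · unfold emb; simpa using hk0'
      · unfold embConj; simpa using hk0'
    · have hfst : ((P.parts.map (fun k : ℕ => (((k : ℤ)), (0 : ℤ)))).sum).1 = (n : ℤ) := by
        rw [← sum_fst', Multiset.map_map]
        simp only [Function.comp_apply]
        rw [← cast_sum', P.parts_sum]
      have hsnd : ((P.parts.map (fun k : ℕ => (((k : ℤ)), (0 : ℤ)))).sum).2 = 0 := by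
        rw [← sum_snd', Multiset.map_map]
        simp
      exact Prod.ext hfst hsnd
    · rintro ⟨m, hpos, hsum⟩
      apply Subtype.ext
      simp only [Multiset.map_map]
      rw [show m.map ((fun k : ℕ => (((k : ℤ)), (0 : ℤ))) ∘ (fun a : ℤ × ℤ => a.1.toNat)) =
          m.map id from Multiset.map_congr rfl (fun a ha => by
            obtain ⟨h2, h1'⟩ := key m hpos hsum a ha
            simp only [Function.comp_apply, id]
            refine Prod.ext ?_ ?_
            · simp only [Int.toNat_of_nonneg h1'.le]
            · exact h2.symm)]
      simp
    · intro P
      apply Nat.Partition.ext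
      simp only [Multiset.map_map]
      rw [show P.parts.map ((fun a : ℤ × ℤ => a.1.toNat) ∘ (fun k : ℕ => (((k : ℤ)), (0 : ℤ)))) =
          P.parts.map id from Multiset.map_congr rfl (fun k hk => by simp)]
      simp
  rw [pK, Nat.card_congr e, Nat.card_eq_fintype_card]
end

section
/- Let n ∈ ℤ≥1 and let D ≥ 2 be a squarefree integer with D ≡ 2 or 3 (mod 4). If D > ⌊n/2⌋², then the field K = ℚ(√D) satisfies p_K(n) = p(n). -/
section Aux

lemma msum_fst (m : Multiset (ℤ × ℤ)) : m.sum.1 = (m.map Prod.fst).sum := by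
  induction m using Multiset.induction with
  | empty => simp
  | cons a s ih => simp [ih]

lemma msum_snd (m : Multiset (ℤ × ℤ)) : m.sum.2 = (m.map Prod.snd).sum := by
  induction m using Multiset.induction with
  | empty => simp
  | cons a s ih => simp [ih]

lemma totpos_abs (D : ℤ) (hD : 2 ≤ D) (hm4 : D % 4 ≠ 1) (a : ℤ × ℤ)
    (h : TotPos D a) : (a.2.natAbs : ℝ) * Real.sqrt D < a.1 := by
  obtain ⟨h1, h2⟩ := h
  rw [emb, omegaD, if_neg hm4] at h1
  rw [embConj, omegaD', if_neg hm4] at h2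
  have habs : |(a.2 : ℝ) * Real.sqrt D| < a.1 := by
    rw [abs_lt]; constructor <;> nlinarith
  calc (a.2.natAbs : ℝ) * Real.sqrt D = |(a.2 : ℝ)| * Real.sqrt D := by
        congr 1
        simp [Nat.cast_natAbs]
    _ = |(a.2 : ℝ) * Real.sqrt D| := by
        rw [abs_mul, abs_of_nonneg (Real.sqrt_nonneg _)]
    _ < a.1 := habs

lemma totpos_fst_pos (D : ℤ) (hD : 2 ≤ D) (hm4 : D % 4 ≠ 1) (a : ℤ × ℤ)
    (h : TotPos D a) : 1 ≤ a.1 := by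
  have := totpos_abs D hD hm4 a h
  have : (0 : ℝ) < a.1 := lt_of_le_of_lt (by positivity) this
  exact_mod_cast this

lemma totpos_fst_big (n : ℕ) (D : ℤ) (hD : 2 ≤ D) (hm4 : D % 4 ≠ 1)
    (hbound : ((n / 2 : ℕ) : ℤ) ^ 2 < D) (a : ℤ × ℤ)
    (h : TotPos D a) (hy : a.2 ≠ 0) : ((n / 2 : ℕ) : ℤ) < a.1 := by
  have habs := totpos_abs D hD hm4 a h
  have h1 : (1 : ℝ) ≤ (a.2.natAbs : ℝ) := by
    have : 1 ≤ a.2.natAbs := by omega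
    exact_mod_cast this
  have hs : Real.sqrt D < a.1 := by
    have := Real.sqrt_nonneg (D : ℝ)
    nlinarith
  have hfst : (0 : ℝ) < a.1 := lt_of_le_of_lt (Real.sqrt_nonneg _) hs
  have hD2 : (D : ℝ) < (a.1 : ℝ) ^ 2 := by
    rw [← Real.sq_sqrt (by exact_mod_cast (by omega : (0:ℤ) ≤ D) : (0:ℝ) ≤ (D:ℝ))]
    exact pow_lt_pow_left₀ hs (Real.sqrt_nonneg _) two_ne_zero
  have hZ : D < a.1 ^ 2 := by exact_mod_cast hD2
  have hsq : ((n / 2 : ℕ) : ℤ) ^ 2 < a.1 ^ 2 := lt_trans hbound hZ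
  have ha1 : (0:ℤ) ≤ a.1 := by exact_mod_cast hfst.le
  exact lt_of_pow_lt_pow_left₀ 2 ha1 hsq

end Aux

lemma snd_all_zero (n : ℕ) (D : ℤ) (hD : 2 ≤ D) (hm4 : D % 4 ≠ 1)
    (hbound : ((n / 2 : ℕ) : ℤ) ^ 2 < D) (m : Multiset (ℤ × ℤ))
    (hm : ∀ β ∈ m, TotPos D β) (hsum : m.sum = ((n : ℤ), 0)) :
    ∀ β ∈ m, β.2 = 0 := by
  by_contra hc
  push_neg at hc
  obtain ⟨β, hβm, hβ⟩ := hc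
  have hsumsnd : (m.map Prod.snd).sum = 0 := by
    rw [← msum_snd, hsum]
  have hsumfst : (m.map Prod.fst).sum = (n : ℤ) := by
    rw [← msum_fst, hsum]
  -- find an element with positive snd and one with negative snd
  have hex : (∃ γ ∈ m, 0 < γ.2) ∧ (∃ γ ∈ m, γ.2 < 0) := by
    constructor
    · by_contra hno
      push_neg at hno
      have hβneg : β.2 < 0 := lt_of_le_of_ne (hno β hβm) hβ
      have : (m.map Prod.snd).sum < 0 := by
        calc (m.map Prod.snd).sum
            = β.2 + ((m.erase β).map Prod.snd).sum := by
              rw [← Multiset.sum_cons, ← Multiset.map_cons,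
                Multiset.cons_erase hβm]
          _ < 0 := by
              have hle : ((m.erase β).map Prod.snd).sum ≤ 0 := by
                have : ∀ x ∈ (m.erase β).map Prod.snd, x ≤ 0 := by
                  intro x hx
                  obtain ⟨γ, hγ, rfl⟩ := Multiset.mem_map.mp hx
                  exact hno γ (Multiset.mem_of_mem_erase hγ)
                calc ((m.erase β).map Prod.snd).sum
                    ≤ ((m.erase β).map (fun _ => (0:ℤ))).sum :=
                      Multiset.sum_map_le_sum_map _ _
                        (fun γ hγ => hno γ (Multiset.mem_of_mem_erase hγ))
                  _ = 0 := by simp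
              linarith
      omega
    · by_contra hno
      push_neg at hno
      have hβpos : 0 < β.2 := lt_of_le_of_ne (hno β hβm) (Ne.symm hβ)
      have : 0 < (m.map Prod.snd).sum := by
        calc (0:ℤ) < β.2 + ((m.erase β).map Prod.snd).sum := by
              have hle : 0 ≤ ((m.erase β).map Prod.snd).sum := by
                apply Multiset.sum_nonneg
                intro x hx
                obtain ⟨γ, hγ, rfl⟩ := Multiset.mem_map.mp hx
                exact hno γ (Multiset.mem_of_mem_erase hγ)
              linarith
          _ = (m.map Prod.snd).sum := by
              rw [← Multiset.sum_cons, ← Multiset.map_cons,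
                Multiset.cons_erase hβm]
      omega
  obtain ⟨⟨γ₁, hγ₁m, hγ₁⟩, ⟨γ₂, hγ₂m, hγ₂⟩⟩ := hex
  have hne : γ₁ ≠ γ₂ := by
    intro h; rw [h] at hγ₁; omega
  have hγ₂m' : γ₂ ∈ m.erase γ₁ := (Multiset.mem_erase_of_ne (Ne.symm hne)).mpr hγ₂m
  have hbig1 : ((n / 2 : ℕ) : ℤ) < γ₁.1 :=
    totpos_fst_big n D hD hm4 hbound γ₁ (hm γ₁ hγ₁m) (by omega)
  have hbig2 : ((n / 2 : ℕ) : ℤ) < γ₂.1 :=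
    totpos_fst_big n D hD hm4 hbound γ₂ (hm γ₂ hγ₂m) (by omega)
  have hrest : 0 ≤ (((m.erase γ₁).erase γ₂).map Prod.fst).sum := by
    apply Multiset.sum_nonneg
    intro x hx
    obtain ⟨δ, hδ, rfl⟩ := Multiset.mem_map.mp hx
    have hδm : δ ∈ m := Multiset.mem_of_mem_erase (Multiset.mem_of_mem_erase hδ)
    have := totpos_fst_pos D hD hm4 δ (hm δ hδm)
    omega
  have hdecomp : (m.map Prod.fst).sum
      = γ₁.1 + (γ₂.1 + (((m.erase γ₁).erase γ₂).map Prod.fst).sum) := by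
    rw [← Multiset.sum_cons, ← Multiset.sum_cons, ← Multiset.map_cons,
      ← Multiset.map_cons, Multiset.cons_erase hγ₂m', Multiset.cons_erase hγ₁m]
  rw [hsumfst] at hdecomp
  omega

theorem pK_eq_p_of_gt_En (n : ℕ) (hn : 1 ≤ n) (D : ℤ) (hD : 2 ≤ D)
    (hsf : Squarefree D) (hmod : D % 4 = 2 ∨ D % 4 = 3)
    (hbound : ((n / 2 : ℕ) : ℤ) ^ 2 < D) :
    pK D ((n : ℤ), 0) = Fintype.card (Nat.Partition n) := by
  have hm4 : D % 4 ≠ 1 := by omega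
  rw [pK, ← Nat.card_eq_fintype_card]
  apply Nat.card_congr
  refine
    { toFun := fun s => ⟨s.1.map (fun a : ℤ × ℤ => a.1.toNat), ?_, ?_⟩
      invFun := fun p => ⟨p.parts.map (fun k : ℕ => (((k : ℤ), (0 : ℤ)) : ℤ × ℤ)), ?_, ?_⟩
      left_inv := ?_
      right_inv := ?_ }
  · -- parts positive
    intro i hi
    obtain ⟨a, ha, rfl⟩ := Multiset.mem_map.mp hi
    have := totpos_fst_pos D hD hm4 a (s.2.1 a ha)
    omega
  · -- parts sum
    obtain ⟨m, hpos, hsum⟩ := s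
    have hfst : (m.map Prod.fst).sum = (n : ℤ) := by rw [← msum_fst, hsum]
    have key : (((m.map (fun a : ℤ × ℤ => a.1.toNat)).sum : ℕ) : ℤ) = (n : ℤ) := by
      rw [Nat.cast_multiset_sum, Multiset.map_map, ← hfst]
      refine congrArg Multiset.sum (Multiset.map_congr rfl ?_)
      intro a ha
      have := totpos_fst_pos D hD hm4 a (hpos a ha)
      simp only [Function.comp_apply]
      omega
    exact_mod_cast key
  · -- invFun: totally positive
    intro β hβ
    obtain ⟨k, hk, rfl⟩ := Multiset.mem_map.mp hβ
    have hk1 : 0 < k := p.parts_pos hk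
    have hkR : (0:ℝ) < (k : ℝ) := by exact_mod_cast hk1
    constructor
    · simp only [emb]; simpa using hkR
    · simp only [embConj]; simpa using hkR
  · -- invFun: sum
    ext
    · rw [msum_fst, Multiset.map_map]
      have : ((Prod.fst ∘ fun k : ℕ => (((k : ℤ), (0 : ℤ)) : ℤ × ℤ)))
          = (fun k : ℕ => (k : ℤ)) := rfl
      rw [this, ← Nat.cast_multiset_sum, p.parts_sum]
    · rw [msum_snd, Multiset.map_map]
      simp
  · -- left inverse
    rintro ⟨m, hpos, hsum⟩
    apply Subtype.ext
    simp only [Multiset.map_map]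
    have hz := snd_all_zero n D hD hm4 hbound m hpos hsum
    calc m.map ((fun k : ℕ => (((k : ℤ), (0 : ℤ)) : ℤ × ℤ)) ∘ (fun a : ℤ × ℤ => a.1.toNat))
          = m.map id := by
          apply Multiset.map_congr rfl
          intro a ha
          have h1 := totpos_fst_pos D hD hm4 a (hpos a ha)
          have h2 := hz a ha
          simp only [Function.comp_apply, id]
          ext
          · simp; omega
          · simp [h2]
      _ = m := Multiset.map_id m
  · -- right inverse
    intro p
    apply Nat.Partition.ext
    simp only [Multiset.map_map]
    calc p.parts.map ((fun a : ℤ × ℤ => a.1.toNat) ∘ (fun k : ℕ => (((k : ℤ), (0 : ℤ)) : ℤ × ℤ)))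
          = p.parts.map id := by
          apply Multiset.map_congr rfl
          intro k hk
          simp
      _ = p.parts := Multiset.map_id _
end

section
/- Let n ∈ ℤ≥1 and let D be a squarefree integer with D ≡ 1 (mod 4), D ≥ 5. Define F_n = (n−1)² if n is even and F_n = n² if n is odd. If D > F_n, then the field K = ℚ(√D) satisfies p_K(n) = p(n). -/
/-- Characterization of total positivity when `D ≡ 1 (mod 4)`. -/
lemma totPos_iff_aux (D : ℤ) (hmod : D % 4 = 1) (β : ℤ × ℤ) :
    TotPos D β ↔ |(β.2 : ℝ)| * Real.sqrt D < ((2 * β.1 + β.2 : ℤ) : ℝ) := by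
  have hs : (0:ℝ) ≤ Real.sqrt D := Real.sqrt_nonneg _
  have h1 : emb D β = (((2 * β.1 + β.2 : ℤ) : ℝ) + β.2 * Real.sqrt D) / 2 := by
    simp only [emb, omegaD, if_pos hmod]; push_cast; ring
  have h2 : embConj D β = (((2 * β.1 + β.2 : ℤ) : ℝ) - β.2 * Real.sqrt D) / 2 := by
    simp only [embConj, omegaD', if_pos hmod]; push_cast; ring
  rw [show |(β.2 : ℝ)| * Real.sqrt D = |(β.2 : ℝ) * Real.sqrt D| by
        rw [abs_mul, abs_of_nonneg hs],
      abs_lt]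
  unfold TotPos
  rw [h1, h2]
  constructor
  · rintro ⟨ha, hb⟩; constructor <;> linarith
  · rintro ⟨ha, hb⟩; constructor <;> linarith

/-- Totally positive elements have trace `≥ 1`. -/
lemma trace_pos_of_totPos (D : ℤ) (hmod : D % 4 = 1) (β : ℤ × ℤ)
    (h : TotPos D β) : 1 ≤ 2 * β.1 + β.2 := by
  rw [totPos_iff_aux D hmod] at h
  have h0 : (0:ℝ) ≤ |(β.2 : ℝ)| * Real.sqrt D :=
    mul_nonneg (abs_nonneg _) (Real.sqrt_nonneg _)
  have : (0:ℝ) < ((2 * β.1 + β.2 : ℤ) : ℝ) := lt_of_le_of_lt h0 h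
  have : (0:ℤ) < 2 * β.1 + β.2 := by exact_mod_cast this
  omega

/-- Irrational totally positive elements have trace greater than `√D`. -/
lemma sqrt_lt_trace (D : ℤ) (hmod : D % 4 = 1) (β : ℤ × ℤ)
    (h : TotPos D β) (hy : β.2 ≠ 0) :
    Real.sqrt D < ((2 * β.1 + β.2 : ℤ) : ℝ) := by
  rw [totPos_iff_aux D hmod] at h
  have h1 : (1:ℝ) ≤ |(β.2 : ℝ)| := by
    have : (1:ℤ) ≤ |β.2| := Int.one_le_abs hy
    calc (1:ℝ) ≤ ((|β.2| : ℤ) : ℝ) := by exact_mod_cast this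
    _ = |(β.2 : ℝ)| := by push_cast; ring
  calc Real.sqrt D = 1 * Real.sqrt D := (one_mul _).symm
    _ ≤ |(β.2 : ℝ)| * Real.sqrt D :=
        mul_le_mul_of_nonneg_right h1 (Real.sqrt_nonneg _)
    _ < _ := h

/-- The heart of the matter: under the size hypothesis on `D`, every
totally positive partition of the rational integer `n` consists of
rational integers. -/
lemma snd_eq_zero_of_mem (n : ℕ) (hn : 1 ≤ n) (D : ℤ) (hD : 5 ≤ D)
    (hmod : D % 4 = 1)
    (hbound : (if Even n then ((n : ℤ) - 1) ^ 2 else (n : ℤ) ^ 2) < D)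
    (m : Multiset (ℤ × ℤ)) (hpos : ∀ β ∈ m, TotPos D β)
    (hsum : m.sum = ((n : ℤ), 0)) : ∀ β ∈ m, β.2 = 0 := by
  by_contra hcon
  push_neg at hcon
  obtain ⟨β, hβm, hβ2⟩ := hcon
  obtain ⟨m1, rfl⟩ := Multiset.exists_cons_of_mem hβm
  -- second coordinates sum to 0
  have hsnd : ((β ::ₘ m1).map Prod.snd).sum = 0 := by
    have h := map_multiset_sum (AddMonoidHom.snd ℤ ℤ) (β ::ₘ m1)
    rw [hsum] at h
    simpa using h.symm
  have hfst : ((β ::ₘ m1).map Prod.fst).sum = (n : ℤ) := by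
    have h := map_multiset_sum (AddMonoidHom.fst ℤ ℤ) (β ::ₘ m1)
    rw [hsum] at h
    simpa using h.symm
  -- there is a second element with nonzero second coordinate
  have hex : ∃ γ ∈ m1, γ.2 ≠ 0 := by
    by_contra h
    push_neg at h
    have hz : (m1.map Prod.snd).sum = 0 := by
      apply Multiset.sum_eq_zero
      intro x hx
      obtain ⟨γ, hγ, rfl⟩ := Multiset.mem_map.mp hx
      exact h γ hγ
    rw [Multiset.map_cons, Multiset.sum_cons, hz] at hsnd
    omega
  obtain ⟨γ, hγm, hγ2⟩ := hex
  obtain ⟨m2, rfl⟩ := Multiset.exists_cons_of_mem hγm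
  -- total trace is 2n
  have htr : ((β ::ₘ γ ::ₘ m2).map (fun x => 2 * x.1 + x.2)).sum = 2 * (n : ℤ) := by
    rw [Multiset.sum_map_add, Multiset.sum_map_mul_left, hfst, hsnd]
    ring
  -- traces of remaining parts are nonnegative
  have hrest : 0 ≤ (m2.map (fun x => 2 * x.1 + x.2)).sum := by
    apply Multiset.sum_nonneg
    intro x hx
    obtain ⟨δ, hδ, rfl⟩ := Multiset.mem_map.mp hx
    have : TotPos D δ := hpos δ (by
      simp [Multiset.mem_cons, hδ])
    have := trace_pos_of_totPos D hmod δ this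
    omega
  rw [Multiset.map_cons, Multiset.map_cons, Multiset.sum_cons, Multiset.sum_cons] at htr
  have hβpos : TotPos D β := hpos β (Multiset.mem_cons_self _ _)
  have hγpos : TotPos D γ := hpos γ (by simp)
  have hβtr := sqrt_lt_trace D hmod β hβpos hβ2
  have hγtr := sqrt_lt_trace D hmod γ hγpos hγ2
  rcases Nat.even_or_odd n with he | ho
  · -- even case : D > (n-1)^2
    rw [if_pos he] at hbound
    have hsq : ((n : ℝ) - 1) < Real.sqrt D := by
      apply Real.lt_sqrt_of_sq_lt
      have : (((n : ℤ) - 1) ^ 2 : ℝ) < (D : ℝ) := by exact_mod_cast hbound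
      push_cast at this ⊢
      linarith
    -- traces are ≥ n
    have hβn : (n : ℤ) ≤ 2 * β.1 + β.2 := by
      have : ((n : ℝ) - 1) < ((2 * β.1 + β.2 : ℤ) : ℝ) := lt_trans hsq hβtr
      have : ((n : ℤ) - 1 : ℤ) < 2 * β.1 + β.2 := by exact_mod_cast this
      omega
    have hγn : (n : ℤ) ≤ 2 * γ.1 + γ.2 := by
      have : ((n : ℝ) - 1) < ((2 * γ.1 + γ.2 : ℤ) : ℝ) := lt_trans hsq hγtr
      have : ((n : ℤ) - 1 : ℤ) < 2 * γ.1 + γ.2 := by exact_mod_cast this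
      omega
    -- hence trace β = n exactly
    have hβeq : 2 * β.1 + β.2 = (n : ℤ) := by omega
    -- n even, so β.2 is even and nonzero, |β.2| ≥ 2
    have h2 : Even (n : ℤ) := (Int.even_coe_nat n).mpr he
    have hy2 : 2 ≤ |β.2| := by
      rcases h2 with ⟨k, hk⟩
      rcases le_or_gt 0 β.2 with h | h
      · rw [abs_of_nonneg h]; omega
      · rw [abs_of_neg h]; omega
    -- from total positivity: |β.2| √D < n
    have hlt : |(β.2 : ℝ)| * Real.sqrt D < (n : ℝ) := by
      have := (totPos_iff_aux D hmod β).mp hβpos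
      rw [hβeq] at this
      exact_mod_cast this
    have habs : (2 : ℝ) ≤ |(β.2 : ℝ)| := by
      calc (2:ℝ) ≤ ((|β.2| : ℤ) : ℝ) := by exact_mod_cast hy2
      _ = |(β.2 : ℝ)| := by push_cast; ring
    have h2n : 2 ≤ n := by
      rcases he with ⟨k, hk⟩; omega
    have : (2 : ℝ) * Real.sqrt D ≤ |(β.2 : ℝ)| * Real.sqrt D :=
      mul_le_mul_of_nonneg_right habs (Real.sqrt_nonneg _)
    have hn2 : (2 : ℝ) ≤ (n : ℝ) := by exact_mod_cast h2n
    linarith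
  · -- odd case : D > n^2
    rw [if_neg (Nat.not_even_iff_odd.mpr ho)] at hbound
    have hsq : (n : ℝ) < Real.sqrt D := by
      apply Real.lt_sqrt_of_sq_lt
      have : (((n : ℤ)) ^ 2 : ℝ) < (D : ℝ) := by exact_mod_cast hbound
      push_cast at this ⊢
      linarith
    have hβn : (n : ℤ) + 1 ≤ 2 * β.1 + β.2 := by
      have : (n : ℝ) < ((2 * β.1 + β.2 : ℤ) : ℝ) := lt_trans hsq hβtr
      have : (n : ℤ) < 2 * β.1 + β.2 := by exact_mod_cast this
      omega
    have hγn : (n : ℤ) + 1 ≤ 2 * γ.1 + γ.2 := by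
      have : (n : ℝ) < ((2 * γ.1 + γ.2 : ℤ) : ℝ) := lt_trans hsq hγtr
      have : (n : ℤ) < 2 * γ.1 + γ.2 := by exact_mod_cast this
      omega
    omega

/-- Summing pairs `(k, 0)`. -/
lemma pair_sum_eq (s : Multiset ℕ) :
    (s.map fun k : ℕ => ((k : ℤ), (0:ℤ))).sum = (((s.sum : ℕ) : ℤ), 0) := by
  induction s using Multiset.induction with
  | empty => simp; rfl
  | cons a s ih =>
    simp only [Multiset.map_cons, Multiset.sum_cons, ih, Multiset.sum_cons]
    rw [Prod.mk_add_mk]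
    push_cast
    simp

theorem pK_eq_p_of_gt_Fn (n : ℕ) (hn : 1 ≤ n) (D : ℤ) (hD : 5 ≤ D)
    (hsf : Squarefree D) (hmod : D % 4 = 1)
    (hbound : (if Even n then ((n : ℤ) - 1) ^ 2 else (n : ℤ) ^ 2) < D) :
    pK D ((n : ℤ), 0) = Fintype.card (Nat.Partition n) := by
  rw [← Nat.card_eq_fintype_card]
  apply Nat.card_congr
  -- every element of such a multiset is of the form (x, 0) with x ≥ 1
  have key : ∀ (m : Multiset (ℤ × ℤ)), (∀ β ∈ m, TotPos D β) → m.sum = ((n : ℤ), 0) →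
      ∀ β ∈ m, β.2 = 0 ∧ 1 ≤ β.1 := by
    intro m hpos hsum β hβ
    have h0 := snd_eq_zero_of_mem n hn D hD hmod hbound m hpos hsum β hβ
    refine ⟨h0, ?_⟩
    have := trace_pos_of_totPos D hmod β (hpos β hβ)
    omega
  refine ⟨fun x => ⟨x.1.map (fun β => β.1.toNat), ?_, ?_⟩,
    fun p => ⟨p.parts.map (fun k : ℕ => ((k : ℤ), (0:ℤ))), ?_, ?_⟩, ?_, ?_⟩
  · -- parts positive
    intro i hi
    obtain ⟨β, hβ, rfl⟩ := Multiset.mem_map.mp hi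
    have := (key x.1 x.2.1 x.2.2 β hβ).2
    omega
  · -- parts sum
    obtain ⟨m, hpos, hsum⟩ := x
    have hfst : (m.map Prod.fst).sum = (n : ℤ) := by
      have h := map_multiset_sum (AddMonoidHom.fst ℤ ℤ) m
      rw [hsum] at h
      simpa using h.symm
    have : (((m.map fun β => β.1.toNat).sum : ℕ) : ℤ) = (n : ℤ) := by
      rw [Nat.cast_multiset_sum, Multiset.map_map]
      rw [← hfst]
      apply congrArg
      apply Multiset.map_congr rfl
      intro β hβ
      have := (key m hpos hsum β hβ).2
      simp only [Function.comp_apply]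
      omega
    exact_mod_cast this
  · -- TotPos of (k, 0)
    intro β hβ
    obtain ⟨k, hk, rfl⟩ := Multiset.mem_map.mp hβ
    rw [totPos_iff_aux D hmod]
    have hkpos : 0 < k := p.parts_pos hk
    simp only [abs_zero, Int.cast_zero, zero_mul]
    push_cast
    positivity
  · -- sum is (n, 0)
    rw [pair_sum_eq p.parts, p.parts_sum]
  · -- left inverse
    rintro ⟨m, hpos, hsum⟩
    apply Subtype.ext
    simp only [Multiset.map_map]
    rw [show (fun k : ℕ => ((k : ℤ), (0:ℤ))) ∘ (fun β : ℤ × ℤ => β.1.toNat) =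
      (fun β : ℤ × ℤ => ((β.1.toNat : ℤ), (0:ℤ))) from rfl]
    calc m.map (fun β : ℤ × ℤ => ((β.1.toNat : ℤ), (0:ℤ)))
        = m.map id := by
          apply Multiset.map_congr rfl
          intro β hβ
          obtain ⟨h0, h1⟩ := key m hpos hsum β hβ
          have : (β.1.toNat : ℤ) = β.1 := Int.toNat_of_nonneg (by omega)
          ext <;> simp [this, h0]
      _ = m := Multiset.map_id m
  · -- right inverse
    intro p
    apply Nat.Partition.ext
    simp only [Multiset.map_map]
    calc p.parts.map ((fun β : ℤ × ℤ => β.1.toNat) ∘ fun k : ℕ => ((k : ℤ), (0:ℤ)))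
        = p.parts.map id := by
          apply Multiset.map_congr rfl
          intro k hk
          simp
      _ = p.parts := Multiset.map_id _
end

section
/- Let n ∈ ℤ≥4 and let D ≥ 2 be a squarefree integer with D ≡ 2 or 3 (mod 4). If D ≤ ⌊n/2⌋², then the field K = ℚ(√D) satisfies p_K(n) > p(n). (Thus the bound ⌊n/2⌋² in the previous statement is optimal.) -/
/-- `emb` as an additive monoid hom. -/
noncomputable def embHom (D : ℤ) : ℤ × ℤ →+ ℝ where
  toFun := emb D
  map_zero' := by simp [emb]
  map_add' := fun a b => by simp only [emb, Prod.fst_add, Prod.snd_add, Int.cast_add]; ring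

noncomputable def embConjHom (D : ℤ) : ℤ × ℤ →+ ℝ where
  toFun := embConj D
  map_zero' := by simp [embConj]
  map_add' := fun a b => by simp only [embConj, Prod.fst_add, Prod.snd_add, Int.cast_add]; ring

/-- The map `k ↦ (k, 0)` as an additive monoid hom. -/
def natPairHom : ℕ →+ ℤ × ℤ := AddMonoidHom.prod (Nat.castAddMonoidHom ℤ) 0

lemma finite_pK_type (n : ℕ) (D : ℤ) (hD : 2 ≤ D) (hmod : D % 4 = 2 ∨ D % 4 = 3) :
    Finite {m : Multiset (ℤ × ℤ) // (∀ β ∈ m, TotPos D β) ∧ m.sum = ((n : ℤ), 0)} := by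
  classical
  have hmod1 : D % 4 ≠ 1 := by rcases hmod with h | h <;> omega
  have homega : omegaD D = Real.sqrt D := if_neg hmod1
  have homega' : omegaD' D = -Real.sqrt D := if_neg hmod1
  have hs1 : (1 : ℝ) < Real.sqrt D := by
    rw [show (1:ℝ) = Real.sqrt 1 by simp]
    apply Real.sqrt_lt_sqrt (by norm_num)
    exact_mod_cast lt_of_lt_of_le one_lt_two hD
  set S : Finset (ℤ × ℤ) := Finset.Icc (-(n:ℤ), -(n:ℤ)) ((n:ℤ), (n:ℤ)) with hS
  set F : (ℤ × ℤ) →₀ ℕ := Finsupp.indicator S (fun _ _ => n) with hF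
  have key : ∀ m : {m : Multiset (ℤ × ℤ) // (∀ β ∈ m, TotPos D β) ∧ m.sum = ((n : ℤ), 0)},
      (Multiset.toFinsupp m.1) ∈ Set.Iic F := by
    rintro ⟨m, hm, hsum⟩
    -- each element's emb and embConj are in (0, n]
    have hesum : (m.map (emb D)).sum = n := by
      have := (map_multiset_sum (embHom D) m).symm
      simpa [hsum, embHom, emb] using this
    have hcsum : (m.map (embConj D)).sum = n := by
      have := (map_multiset_sum (embConjHom D) m).symm
      simpa [hsum, embConjHom, embConj] using this
    have hbounds : ∀ β ∈ m, β ∈ S := by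
      intro β hβ
      obtain ⟨he, hc⟩ := hm β hβ
      have hle : emb D β ≤ n := by
        rw [← hesum]
        refine Multiset.single_le_sum ?_ _ (Multiset.mem_map_of_mem _ hβ)
        rintro x hx
        obtain ⟨γ, hγ, rfl⟩ := Multiset.mem_map.1 hx
        exact (hm γ hγ).1.le
      have hcle : embConj D β ≤ n := by
        rw [← hcsum]
        refine Multiset.single_le_sum ?_ _ (Multiset.mem_map_of_mem _ hβ)
        rintro x hx
        obtain ⟨γ, hγ, rfl⟩ := Multiset.mem_map.1 hx
        exact (hm γ hγ).2.le
      obtain ⟨x, y⟩ := β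
      simp only [emb, embConj, homega, homega'] at he hc hle hcle
      have hx1 : (1 : ℝ) ≤ x := by
        have : (0:ℝ) < 2 * x := by nlinarith
        have : (0:ℤ) < x := by exact_mod_cast (by linarith : (0:ℝ) < x)
        exact_mod_cast this
      have hxn : (x : ℝ) ≤ n := by nlinarith
      have hyn : (y : ℝ) ≤ n := by
        rcases le_or_gt (y:ℝ) 0 with h | h
        · have : (0:ℝ) ≤ n := by positivity
          linarith
        · nlinarith
      have hyn' : -(n : ℝ) ≤ y := by
        rcases le_or_gt 0 (y:ℝ) with h | h
        · have : (0:ℝ) ≤ n := by positivity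
          linarith
        · nlinarith
      rw [hS, Finset.mem_Icc]
      constructor
      · exact ⟨by exact_mod_cast le_trans (by linarith : -(n:ℝ) ≤ 1) hx1, by exact_mod_cast hyn'⟩
      · exact ⟨by exact_mod_cast hxn, by exact_mod_cast hyn⟩
    have hcard : Multiset.card m ≤ n := by
      have hfsum : (m.map Prod.fst).sum = (n : ℤ) := by
        have := (map_multiset_sum (AddMonoidHom.fst ℤ ℤ) m).symm
        simpa [hsum] using this
      have h1 : Multiset.card (m.map Prod.fst) • (1:ℤ) ≤ (m.map Prod.fst).sum := by
        apply Multiset.card_nsmul_le_sum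
        intro x hx
        obtain ⟨γ, hγ, rfl⟩ := Multiset.mem_map.1 hx
        obtain ⟨he, hc⟩ := hm γ hγ
        simp only [emb, embConj, homega, homega'] at he hc
        have : (0:ℝ) < 2 * γ.1 := by nlinarith
        have : (0:ℤ) < γ.1 := by exact_mod_cast (by linarith : (0:ℝ) < γ.1)
        omega
      rw [hfsum, Multiset.card_map] at h1
      rw [nsmul_eq_mul, mul_one] at h1
      exact_mod_cast h1
    -- show toFinsupp ≤ F
    intro a
    simp only [Multiset.toFinsupp_apply, hF, Finsupp.indicator_apply]
    split
    · exact le_trans (Multiset.count_le_card a m) hcard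
    · rename_i hnot
      simp only [Nat.le_zero, Multiset.count_eq_zero]
      intro hmem
      exact hnot (hbounds a hmem)
  refine Finite.of_injective (fun m => (⟨Multiset.toFinsupp m.1, key m⟩ : Set.Iic F)) ?_
  · intro a b hab
    apply Subtype.ext
    have := congrArg Subtype.val hab
    simpa using Multiset.toFinsupp.injective this

theorem pK_gt_p_of_le_En (n : ℕ) (hn : 4 ≤ n) (D : ℤ) (hD : 2 ≤ D)
    (hsf : Squarefree D) (hmod : D % 4 = 2 ∨ D % 4 = 3)
    (hbound : D ≤ ((n / 2 : ℕ) : ℤ) ^ 2) :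
    pK D ((n : ℤ), 0) > Fintype.card (Nat.Partition n) := by
  classical
  have hmod1 : D % 4 ≠ 1 := by rcases hmod with h | h <;> omega
  have homega : omegaD D = Real.sqrt D := if_neg hmod1
  have homega' : omegaD' D = -Real.sqrt D := if_neg hmod1
  have hfin := finite_pK_type n D hD hmod
  set q : ℕ := n / 2 with hq
  have hq2 : 2 ≤ q := by omega
  have hqn : (q : ℤ) ≤ (n : ℤ) - q := by
    have : 2 * q ≤ n := by omega
    omega
  have hDq : D < (q : ℤ) ^ 2 := by
    rcases lt_or_eq_of_le hbound with h | h
    · exact h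
    · exfalso
      have : IsUnit (q : ℤ) := hsf (q : ℤ) (by rw [h]; ring_nf; exact dvd_refl _)
      rw [Int.isUnit_iff] at this
      rcases this with h' | h' <;> omega
  have hsq : Real.sqrt D < q := by
    rw [Real.sqrt_lt' (by positivity : (0:ℝ) < (q:ℝ))]
    exact_mod_cast hDq
  have hs0 : (0 : ℝ) ≤ Real.sqrt D := Real.sqrt_nonneg _
  -- the special partition
  set m0 : Multiset (ℤ × ℤ) := {((q:ℤ), 1), ((n:ℤ) - q, -1)} with hm0
  have hm0tot : ∀ β ∈ m0, TotPos D β := by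
    intro β hβ
    rw [hm0] at hβ
    simp only [Multiset.insert_eq_cons, Multiset.mem_cons, Multiset.mem_singleton] at hβ
    rcases hβ with rfl | rfl
    · constructor
      · simp only [emb, homega]
        push_cast
        nlinarith [hsq, hs0, (by exact_mod_cast hq2 : (2:ℝ) ≤ (q:ℝ))]
      · simp only [embConj, homega']
        push_cast
        nlinarith
    · constructor
      · simp only [emb, homega]
        push_cast
        have : (q:ℝ) ≤ (n:ℝ) - q := by exact_mod_cast hqn
        nlinarith
      · simp only [embConj, homega']
        push_cast
        have : (q:ℝ) ≤ (n:ℝ) - q := by exact_mod_cast hqn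
        nlinarith
  have hm0sum : m0.sum = ((n : ℤ), 0) := by
    rw [hm0]
    simp [Prod.ext_iff]
  -- partitions of n map in
  set T := {m : Multiset (ℤ × ℤ) // (∀ β ∈ m, TotPos D β) ∧ m.sum = ((n : ℤ), 0)} with hT
  have hptot : ∀ p : Nat.Partition n, (∀ β ∈ p.parts.map natPairHom, TotPos D β) ∧
      (p.parts.map natPairHom).sum = ((n : ℤ), 0) := by
    intro p
    constructor
    · intro β hβ
      obtain ⟨k, hk, rfl⟩ := Multiset.mem_map.1 hβ
      have hkpos : 0 < k := p.parts_pos hk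
      constructor
      · simp only [emb, natPairHom, AddMonoidHom.prod_apply, Nat.castAddMonoidHom,
          AddMonoidHom.zero_apply, AddMonoidHom.coe_mk, ZeroHom.coe_mk]
        push_cast
        simpa using (by exact_mod_cast hkpos : (0:ℝ) < k)
      · simp only [embConj, natPairHom, AddMonoidHom.prod_apply, Nat.castAddMonoidHom,
          AddMonoidHom.zero_apply, AddMonoidHom.coe_mk, ZeroHom.coe_mk]
        push_cast
        simpa using (by exact_mod_cast hkpos : (0:ℝ) < k)
    · rw [← map_multiset_sum natPairHom p.parts, p.parts_sum]
      simp [natPairHom]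
  set g : Option (Nat.Partition n) → T := fun o =>
    match o with
    | none => ⟨m0, hm0tot, hm0sum⟩
    | some p => ⟨p.parts.map natPairHom, hptot p⟩ with hg
  have hginj : Function.Injective g := by
    intro a b hab
    have hval := congrArg Subtype.val hab
    match a, b with
    | none, none => rfl
    | none, some p =>
      exfalso
      simp only [hg] at hval
      have : ((q:ℤ), (1:ℤ)) ∈ p.parts.map natPairHom := by
        rw [← hval, hm0]; simp
      obtain ⟨k, _, hk⟩ := Multiset.mem_map.1 this
      simp [natPairHom, Prod.ext_iff] at hk
    | some p, none =>
      exfalso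
      simp only [hg] at hval
      have : ((q:ℤ), (1:ℤ)) ∈ p.parts.map natPairHom := by
        rw [hval, hm0]; simp
      obtain ⟨k, _, hk⟩ := Multiset.mem_map.1 this
      simp [natPairHom, Prod.ext_iff] at hk
    | some p, some p' =>
      simp only [hg] at hval
      congr 1
      apply Nat.Partition.ext
      have := congrArg (Multiset.map (fun a : ℤ × ℤ => a.1.toNat)) hval
      simpa [Multiset.map_map, natPairHom, Function.comp_def] using this
  have h1 : Nat.card (Option (Nat.Partition n)) ≤ Nat.card T :=
    Nat.card_le_card_of_injective g hginj
  rw [Nat.card_eq_fintype_card, Fintype.card_option] at h1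
  calc Fintype.card (Nat.Partition n) < Fintype.card (Nat.Partition n) + 1 := Nat.lt_succ_self _
    _ ≤ Nat.card T := h1
end

section
/- Let n ∈ ℤ≥3 and let D be a squarefree integer with D ≡ 1 (mod 4), D ≥ 5. Define F_n = (n−1)² if n is even and F_n = n² if n is odd. If D ≤ F_n, then the field K = ℚ(√D) satisfies p_K(n) > p(n). (Thus the bound F_n is optimal.) -/
section Aux

lemma emb_add (D : ℤ) (a b : ℤ × ℤ) : emb D (a + b) = emb D a + emb D b := by
  simp only [emb, Prod.fst_add, Prod.snd_add]; push_cast; ring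

lemma embConj_add (D : ℤ) (a b : ℤ × ℤ) : embConj D (a + b) = embConj D a + embConj D b := by
  simp only [embConj, Prod.fst_add, Prod.snd_add]; push_cast; ring

lemma nSum (m : Multiset (ℤ × ℤ)) :
    (m.map (fun β => 2 * β.1 + β.2)).sum = 2 * m.sum.1 + m.sum.2 := by
  induction m using Multiset.induction_on with
  | empty => simp
  | cons a s ih => simp only [Multiset.map_cons, Multiset.sum_cons, ih, Prod.fst_add,
      Prod.snd_add]; ring

lemma sum_map_pair (s : Multiset ℕ) :
    (s.map (fun k : ℕ => ((k : ℤ), (0 : ℤ)))).sum = ((s.sum : ℤ), 0) := by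
  induction s using Multiset.induction_on with
  | empty => simp; rfl
  | cons a s ih =>
    simp only [Multiset.map_cons, Multiset.sum_cons, ih, Prod.mk_add_mk, add_zero]
    rw [Prod.ext_iff]
    constructor
    · push_cast; ring
    · rfl

end Aux

theorem pK_gt_p_of_le_Fn (n : ℕ) (hn : 3 ≤ n) (D : ℤ) (hD : 5 ≤ D)
    (hsf : Squarefree D) (hmod : D % 4 = 1)
    (hbound : D ≤ (if Even n then ((n : ℤ) - 1) ^ 2 else (n : ℤ) ^ 2)) :
    pK D ((n : ℤ), 0) > Fintype.card (Nat.Partition n) := by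
  have hw : omegaD D = (1 + Real.sqrt D) / 2 := if_pos hmod
  have hw' : omegaD' D = (1 - Real.sqrt D) / 2 := if_pos hmod
  have hD0 : (0 : ℝ) < (D : ℝ) := by exact_mod_cast lt_of_lt_of_le (by norm_num) hD
  have hs0 : (0 : ℝ) < Real.sqrt D := Real.sqrt_pos.mpr hD0
  have hs1 : (1 : ℝ) ≤ Real.sqrt D := Real.one_le_sqrt.mpr (by exact_mod_cast le_trans (by norm_num) hD)
  -- choose a with 2a+1 odd, ≤ n, and D ≤ (2a+1)^2
  obtain ⟨a, ha1, hman, hDa⟩ :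
      ∃ a : ℕ, 1 ≤ a ∧ 2 * a + 1 ≤ n ∧ D ≤ ((2 * a + 1 : ℕ) : ℤ) ^ 2 := by
    rcases Nat.even_or_odd n with he | ho
    · rw [if_pos he] at hbound
      obtain ⟨k, hk⟩ := he
      refine ⟨k - 1, by omega, by omega, ?_⟩
      have h1 : ((2 * (k - 1) + 1 : ℕ) : ℤ) = (n : ℤ) - 1 := by omega
      rw [h1]; exact hbound
    · rw [if_neg (by rcases ho with ⟨k, hk⟩; rintro ⟨j, hj⟩; omega)] at hbound
      obtain ⟨k, hk⟩ := ho
      refine ⟨k, by omega, by omega, ?_⟩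
      have h1 : ((2 * k + 1 : ℕ) : ℤ) = (n : ℤ) := by omega
      rw [h1]; exact hbound
  set m : ℕ := 2 * a + 1 with hmdef
  have hDm : D < ((m : ℕ) : ℤ) ^ 2 := by
    rcases lt_or_eq_of_le hDa with h | h
    · exact h
    · exfalso
      have hd : ((m : ℕ) : ℤ) * ((m : ℕ) : ℤ) ∣ D := by rw [h, pow_two]
      have := hsf _ hd
      rw [Int.isUnit_iff] at this
      omega
  have hsqrt : Real.sqrt D < ((m : ℕ) : ℝ) := by
    rw [Real.sqrt_lt' (by exact_mod_cast (by omega : 0 < m))]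
    exact_mod_cast hDm
  have hma : ((m : ℕ) : ℝ) = 2 * (a : ℝ) + 1 := by push_cast [hmdef]; ring
  have ha1R : (1 : ℝ) ≤ (a : ℝ) := by exact_mod_cast ha1
  -- the three kinds of totally positive elements
  have hTP1 : TotPos D ((a : ℤ), 1) := by
    constructor
    · simp only [emb, hw]; push_cast; linarith
    · simp only [embConj, hw']; push_cast; rw [hma] at hsqrt; linarith
  have hTP2 : TotPos D ((a : ℤ) + 1, -1) := by
    constructor
    · simp only [emb, hw]; push_cast; rw [hma] at hsqrt; linarith
    · simp only [embConj, hw']; push_cast; linarith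
  have hTPk : ∀ k : ℕ, 0 < k → TotPos D ((k : ℤ), 0) := by
    intro k hk
    have : (0 : ℝ) < (k : ℝ) := by exact_mod_cast hk
    constructor
    · simp only [emb]; push_cast; simpa using this
    · simp only [embConj]; push_cast; simpa using this
  -- the extra multiset
  set M0 : Multiset (ℤ × ℤ) :=
    ((a : ℤ), 1) ::ₘ ((a : ℤ) + 1, -1) ::ₘ Multiset.replicate (n - m) ((1 : ℤ), 0) with hM0
  have hM0sum : M0.sum = ((n : ℤ), 0) := by
    rw [hM0]
    simp only [Multiset.sum_cons, Multiset.sum_replicate, Prod.smul_mk, smul_zero,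
      nsmul_eq_mul, mul_one, Prod.mk_add_mk, add_zero, Prod.ext_iff]
    constructor <;> omega
  have hM0pos : ∀ β ∈ M0, TotPos D β := by
    intro β hβ
    rw [hM0] at hβ
    simp only [Multiset.mem_cons, Multiset.mem_replicate] at hβ
    rcases hβ with rfl | rfl | ⟨-, rfl⟩
    · exact hTP1
    · exact hTP2
    · exact hTPk 1 one_pos
  -- the subtype
  set S := {mm : Multiset (ℤ × ℤ) // (∀ β ∈ mm, TotPos D β) ∧ mm.sum = ((n : ℤ), 0)} with hSdef
  -- bounds for elements of S
  have hbnd : ∀ s : S, (∀ β ∈ s.1, -(2 * (n : ℤ)) ≤ β.1 ∧ β.1 ≤ 2 * (n : ℤ) ∧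
      -(2 * (n : ℤ)) ≤ β.2 ∧ β.2 ≤ 2 * (n : ℤ)) ∧ Multiset.card s.1 ≤ 2 * n := by
    rintro ⟨s, hpos, hsum⟩
    have hesum : (s.map (emb D)).sum = (n : ℝ) := by
      rw [← emb_sum, hsum]
      simp only [emb]
      push_cast; ring
    have hcsum : (s.map (embConj D)).sum = (n : ℝ) := by
      rw [← embConj_sum, hsum]
      simp only [embConj]
      push_cast; ring
    have hkey : ∀ β ∈ s, 0 < emb D β ∧ emb D β ≤ n ∧ 0 < embConj D β ∧ embConj D β ≤ n := by
      intro β hβ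
      have h1 : emb D β ≤ (s.map (emb D)).sum := by
        apply Multiset.single_le_sum
        · intro x hx
          obtain ⟨γ, hγ, rfl⟩ := Multiset.mem_map.mp hx
          exact le_of_lt (hpos γ hγ).1
        · exact Multiset.mem_map_of_mem _ hβ
      have h2 : embConj D β ≤ (s.map (embConj D)).sum := by
        apply Multiset.single_le_sum
        · intro x hx
          obtain ⟨γ, hγ, rfl⟩ := Multiset.mem_map.mp hx
          exact le_of_lt (hpos γ hγ).2
        · exact Multiset.mem_map_of_mem _ hβ
      rw [hesum] at h1; rw [hcsum] at h2
      exact ⟨(hpos β hβ).1, h1, (hpos β hβ).2, h2⟩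
    constructor
    · intro β hβ
      obtain ⟨he1, he2, hc1, hc2⟩ := hkey β hβ
      have hplus : (0 : ℝ) < ((2 * β.1 + β.2 : ℤ) : ℝ) ∧ ((2 * β.1 + β.2 : ℤ) : ℝ) ≤ 2 * n := by
        have : ((2 * β.1 + β.2 : ℤ) : ℝ) = emb D β + embConj D β := by
          simp only [emb, embConj, hw, hw']; push_cast; ring
        rw [this]; constructor <;> linarith
      have hNb : 1 ≤ 2 * β.1 + β.2 ∧ 2 * β.1 + β.2 ≤ 2 * (n : ℤ) := by
        constructor
        · exact_mod_cast hplus.1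
        · exact_mod_cast hplus.2
      have hdiff : emb D β - embConj D β = (β.2 : ℝ) * Real.sqrt D := by
        simp only [emb, embConj, hw, hw']; ring
      have hyabs : (|β.2| : ℝ) < (n : ℝ) := by
        have h3 : |(β.2 : ℝ) * Real.sqrt D| < (n : ℝ) := by
          rw [← hdiff, abs_lt]; constructor <;> linarith
        rw [abs_mul, abs_of_nonneg (le_of_lt hs0)] at h3
        calc (|β.2| : ℝ) = |(β.2 : ℝ)| * 1 := by simp
          _ ≤ |(β.2 : ℝ)| * Real.sqrt D := by
              apply mul_le_mul_of_nonneg_left hs1 (abs_nonneg _)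
          _ < n := h3
      have hy : |β.2| < (n : ℤ) := by exact_mod_cast hyabs
      rw [abs_lt] at hy
      omega
    · -- card bound
      have hNsum : (s.map (fun β => 2 * β.1 + β.2)).sum = 2 * (n : ℤ) := by
        rw [nSum, hsum]; ring
      have hcard : (Multiset.card s : ℤ) • (1 : ℤ) ≤ (s.map (fun β => 2 * β.1 + β.2)).sum := by
        have := Multiset.card_nsmul_le_sum (s := s.map (fun β => 2 * β.1 + β.2)) (a := (1 : ℤ)) ?_
        · simpa using this
        · intro x hx
          obtain ⟨β, hβ, rfl⟩ := Multiset.mem_map.mp hx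
          have h1 := (hkey β hβ).1
          have h3 := (hkey β hβ).2.2.1
          have : (0 : ℝ) < ((2 * β.1 + β.2 : ℤ) : ℝ) := by
            have heq : ((2 * β.1 + β.2 : ℤ) : ℝ) = emb D β + embConj D β := by
              simp only [emb, embConj, hw, hw']; push_cast; ring
            rw [heq]; linarith
          have : (0 : ℤ) < 2 * β.1 + β.2 := by exact_mod_cast this
          omega
      rw [hNsum] at hcard
      simp only [smul_eq_mul, mul_one] at hcard
      exact_mod_cast hcard
  -- S is finite
  have hTmem : ∀ s : S, ∀ β ∈ s.1,
      β ∈ Finset.Icc ((-(2 * (n : ℤ)), -(2 * (n : ℤ)))) ((2 * (n : ℤ), 2 * (n : ℤ))) := by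
    intro s β hβ
    obtain ⟨h1, h2, h3, h4⟩ := (hbnd s).1 β hβ
    simp only [Finset.mem_Icc, Prod.le_def]
    exact ⟨⟨h1, h3⟩, ⟨h2, h4⟩⟩
  set T : Finset (ℤ × ℤ) :=
    Finset.Icc ((-(2 * (n : ℤ)), -(2 * (n : ℤ)))) ((2 * (n : ℤ), 2 * (n : ℤ))) with hT
  haveI : Finite S := by
    have hg : Function.Injective (fun (s : S) (t : T) =>
        (⟨s.1.count t.1, Nat.lt_succ_of_le (le_trans (Multiset.count_le_card _ _)
          (hbnd s).2)⟩ : Fin (2 * n + 1))) := by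
      intro s1 s2 h
      apply Subtype.ext
      ext β
      by_cases hβT : β ∈ T
      · exact congrArg Fin.val (congrFun h ⟨β, hβT⟩)
      · rw [Multiset.count_eq_zero_of_notMem, Multiset.count_eq_zero_of_notMem]
        · exact fun hmem => hβT (hTmem s2 β hmem)
        · exact fun hmem => hβT (hTmem s1 β hmem)
    exact Finite.of_injective _ hg
  -- the injection from Option (Nat.Partition n)
  let f : Option (Nat.Partition n) → S := fun o =>
    Option.elim o ⟨M0, hM0pos, hM0sum⟩ (fun p =>
      ⟨p.parts.map (fun k : ℕ => ((k : ℤ), (0 : ℤ))), by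
        intro β hβ
        obtain ⟨k, hk, rfl⟩ := Multiset.mem_map.mp hβ
        exact hTPk k (p.parts_pos hk), by
        rw [sum_map_pair, p.parts_sum]⟩)
  have hM0mem : ((a : ℤ), (1 : ℤ)) ∈ M0 := by
    rw [hM0]; exact Multiset.mem_cons_self _ _
  have hinj : Function.Injective (fun k : ℕ => ((k : ℤ), (0 : ℤ))) := by
    intro x y hxy
    have h2 : (x : ℤ) = (y : ℤ) := by
      simpa using congrArg Prod.fst hxy
    exact_mod_cast h2
  have hfinj : Function.Injective f := by
    intro o1 o2 h
    have h' : (f o1).1 = (f o2).1 := congrArg Subtype.val h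
    cases o1 with
    | none =>
      cases o2 with
      | none => rfl
      | some p =>
        exfalso
        simp only [f, Option.elim] at h'
        have hmem2 : ((a : ℤ), (1 : ℤ)) ∈ p.parts.map (fun k : ℕ => ((k : ℤ), (0 : ℤ))) := by
          rw [← h']; exact hM0mem
        obtain ⟨k, -, hk⟩ := Multiset.mem_map.mp hmem2
        exact one_ne_zero (congrArg Prod.snd hk).symm
    | some p =>
      cases o2 with
      | none =>
        exfalso
        simp only [f, Option.elim] at h'
        have hmem2 : ((a : ℤ), (1 : ℤ)) ∈ p.parts.map (fun k : ℕ => ((k : ℤ), (0 : ℤ))) := by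
          rw [h']; exact hM0mem
        obtain ⟨k, -, hk⟩ := Multiset.mem_map.mp hmem2
        exact one_ne_zero (congrArg Prod.snd hk).symm
      | some q =>
        simp only [f, Option.elim] at h'
        exact congrArg some (Nat.Partition.ext (Multiset.map_injective hinj h'))
  have hle : Nat.card (Option (Nat.Partition n)) ≤ Nat.card S :=
    Nat.card_le_card_of_injective f hfinj
  have hopt : Nat.card (Option (Nat.Partition n)) = Fintype.card (Nat.Partition n) + 1 := by
    simp [Nat.card_eq_fintype_card]
  have hpk : pK D ((n : ℤ), 0) = Nat.card S := rfl
  rw [hpk]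
  omega
end

section
/- Let D ≥ 2 be a squarefree integer and K = ℚ(√D). For every n ∈ ℤ≥0, P_K(n) ≡ p_K(n) (mod 2). -/
/-- The cumulative partition function `P_K(n) = ∑_{α ≻ 0, Tr α = 2n} p_K(α)`,
with `P_K(0) = 1`. -/
noncomputable def PK (D : ℤ) (n : ℕ) : ℕ :=
  if n = 0 then 1 else
    ∑ᶠ α ∈ {α : ℤ × ℤ | TotPos D α ∧ emb D α + embConj D α = 2 * n}, pK D α

namespace PKaux

/-- The Galois conjugation on coordinates. -/
def c (D : ℤ) (a : ℤ × ℤ) : ℤ × ℤ := if D % 4 = 1 then (a.1 + a.2, -a.2) else (a.1, -a.2)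

lemma emb_c (D : ℤ) (a : ℤ × ℤ) : emb D (c D a) = embConj D a := by
  unfold emb embConj c omegaD omegaD'
  split <;> simp <;> push_cast <;> ring

lemma embConj_c (D : ℤ) (a : ℤ × ℤ) : embConj D (c D a) = emb D a := by
  unfold emb embConj c omegaD omegaD'
  split <;> simp <;> push_cast <;> ring

lemma c_c (D : ℤ) (a : ℤ × ℤ) : c D (c D a) = a := by
  unfold c; split <;> simp

lemma c_add (D : ℤ) (a b : ℤ × ℤ) : c D (a + b) = c D a + c D b := by
  unfold c; split <;> refine Prod.ext ?_ ?_ <;> simp <;> ring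

lemma c_zero (D : ℤ) : c D 0 = 0 := by unfold c; split <;> simp

lemma sum_map_c (D : ℤ) (m : Multiset (ℤ × ℤ)) : (m.map (c D)).sum = c D m.sum := by
  induction m using Multiset.induction with
  | empty => simp [c_zero]
  | cons a s ih => simp [ih, c_add]

lemma totPos_c (D : ℤ) (a : ℤ × ℤ) (h : TotPos D a) : TotPos D (c D a) := by
  exact ⟨by rw [emb_c]; exact h.2, by rw [embConj_c]; exact h.1⟩

lemma pK_c (D : ℤ) (α : ℤ × ℤ) : pK D (c D α) = pK D α := by
  unfold pK
  apply Nat.card_congr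
  refine ⟨fun m => ⟨m.1.map (c D), ?_, ?_⟩, fun m => ⟨m.1.map (c D), ?_, ?_⟩, ?_, ?_⟩
  · intro β hβ
    obtain ⟨γ, hγ, rfl⟩ := Multiset.mem_map.1 hβ
    exact totPos_c D γ (m.2.1 γ hγ)
  · rw [sum_map_c, m.2.2, c_c]
  · intro β hβ
    obtain ⟨γ, hγ, rfl⟩ := Multiset.mem_map.1 hβ
    exact totPos_c D γ (m.2.1 γ hγ)
  · rw [sum_map_c, m.2.2]
  · intro m
    apply Subtype.ext
    simp only [Multiset.map_map]
    rw [show (c D ∘ c D) = id from funext (c_c D), Multiset.map_id]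
  · intro m
    apply Subtype.ext
    simp only [Multiset.map_map]
    rw [show (c D ∘ c D) = id from funext (c_c D), Multiset.map_id]

/-- Integer trace. -/
def trZ (D : ℤ) (a : ℤ × ℤ) : ℤ := 2 * a.1 + (if D % 4 = 1 then a.2 else 0)

lemma trZ_cast (D : ℤ) (a : ℤ × ℤ) : ((trZ D a : ℤ) : ℝ) = emb D a + embConj D a := by
  unfold trZ emb embConj omegaD omegaD'
  split <;> push_cast <;> ring

lemma trZ_pos (D : ℤ) (a : ℤ × ℤ) (h : TotPos D a) : 1 ≤ trZ D a := by
  have h0 : (0 : ℝ) < ((trZ D a : ℤ) : ℝ) := by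
    rw [trZ_cast]; exact add_pos h.1 h.2
  have : (0 : ℤ) < trZ D a := by exact_mod_cast h0
  omega

lemma one_le_sqrtD (D : ℤ) (hD : 2 ≤ D) : (1 : ℝ) ≤ Real.sqrt D := by
  rw [show (1:ℝ) = Real.sqrt 1 by simp]
  exact Real.sqrt_le_sqrt (by exact_mod_cast (by omega : (1:ℤ) ≤ D))

lemma omega_sub (D : ℤ) (hD : 2 ≤ D) : (1 : ℝ) ≤ omegaD D - omegaD' D := by
  have h := one_le_sqrtD D hD
  unfold omegaD omegaD'
  split
  · linarith [h]
  · linarith [h]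

lemma S_finite (D : ℤ) (hD : 2 ≤ D) (n : ℕ) :
    {α : ℤ × ℤ | TotPos D α ∧ emb D α + embConj D α = 2 * (n : ℝ)}.Finite := by
  apply Set.Finite.subset (Set.finite_Icc ((-(2*(n:ℤ)), -(2*(n:ℤ)))) ((2*(n:ℤ)), (2*(n:ℤ))))
  rintro ⟨x, y⟩ ⟨⟨h1, h2⟩, h3⟩
  have hωs := omega_sub D hD
  have hemb : emb D (x, y) = 2 * (n:ℝ) - embConj D (x, y) := by linarith
  have hub1 : emb D (x, y) ≤ 2 * (n:ℝ) := by linarith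
  have hub2 : embConj D (x, y) ≤ 2 * (n:ℝ) := by linarith
  have hdiff : emb D (x, y) - embConj D (x, y) = (y : ℝ) * (omegaD D - omegaD' D) := by
    unfold emb embConj; ring
  have habs : |(y : ℝ)| ≤ 2 * (n : ℝ) := by
    calc |(y:ℝ)| ≤ |(y:ℝ)| * (omegaD D - omegaD' D) :=
          le_mul_of_one_le_right (abs_nonneg _) hωs
      _ = |(y:ℝ) * (omegaD D - omegaD' D)| := by
          rw [abs_mul, abs_of_nonneg (by linarith : (0:ℝ) ≤ omegaD D - omegaD' D)]
      _ = |emb D (x, y) - embConj D (x, y)| := by rw [hdiff]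
      _ ≤ 2 * (n:ℝ) := abs_le.mpr ⟨by linarith, by linarith⟩
  have hy : |y| ≤ 2 * (n:ℤ) := by exact_mod_cast (by push_cast; exact habs : ((|y|:ℤ):ℝ) ≤ ((2*(n:ℤ) : ℤ) : ℝ))
  have htr : trZ D (x, y) = 2 * (n : ℤ) := by
    have : ((trZ D (x, y) : ℤ) : ℝ) = ((2 * (n:ℤ) : ℤ) : ℝ) := by
      rw [trZ_cast, h3]; push_cast; ring
    exact_mod_cast this
  have hy' : -(2*(n:ℤ)) ≤ y ∧ y ≤ 2*(n:ℤ) := abs_le.mp hy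
  unfold trZ at htr
  constructor <;> constructor <;> simp only [] <;> split at htr <;> simp at htr ⊢ <;> omega

lemma trZ_add (D : ℤ) (a b : ℤ × ℤ) : trZ D (a + b) = trZ D a + trZ D b := by
  unfold trZ; split <;> simp <;> ring

lemma sum_map_trZ (D : ℤ) (m : Multiset (ℤ × ℤ)) : (m.map (trZ D)).sum = trZ D m.sum := by
  induction m using Multiset.induction with
  | empty => simp [trZ]
  | cons a s ih => simp [ih, trZ_add]

lemma multiset_eq_zero (D : ℤ) (m : Multiset (ℤ × ℤ)) (hm : ∀ β ∈ m, TotPos D β)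
    (hs : trZ D m.sum ≤ 0) : m = 0 := by
  by_contra h
  obtain ⟨a, ha⟩ := Multiset.exists_mem_of_ne_zero h
  have h1 : trZ D a ≤ (m.map (trZ D)).sum := by
    apply Multiset.single_le_sum
    · intro x hx
      obtain ⟨β, hβ, rfl⟩ := Multiset.mem_map.1 hx
      exact le_trans (by norm_num) (trZ_pos D β (hm β hβ))
    · exact Multiset.mem_map_of_mem _ ha
  rw [sum_map_trZ] at h1
  have := trZ_pos D a (hm a ha)
  omega

lemma pK_zero (D : ℤ) : pK D ((0:ℤ), (0:ℤ)) = 1 := by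
  unfold pK
  haveI : Unique {m : Multiset (ℤ × ℤ) // (∀ β ∈ m, TotPos D β) ∧ m.sum = ((0:ℤ), (0:ℤ))} :=
    { default := ⟨0, by simp, rfl⟩
      uniq := by
        rintro ⟨m, hm, hs⟩
        apply Subtype.ext
        exact multiset_eq_zero D m hm (by rw [hs]; simp [trZ]) }
  exact Nat.card_unique

lemma c_eq_self (D : ℤ) (a : ℤ × ℤ) (h : c D a = a) : a.2 = 0 := by
  unfold c at h
  split at h <;> rw [Prod.ext_iff] at h <;> simp at h <;> omega

end PKaux

open PKaux

theorem PK_modEq_pK (D : ℤ) (hD : 2 ≤ D) (hsf : Squarefree D) (n : ℕ) :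
    PK D n ≡ pK D ((n : ℤ), 0) [MOD 2] := by
  classical
  rcases Nat.eq_zero_or_pos n with rfl | hn
  · have : pK D (((0:ℕ):ℤ), 0) = 1 := pK_zero D
    rw [this]
    simp [PK]
    rfl
  · have hn' : n ≠ 0 := hn.ne'
    set S : Set (ℤ × ℤ) := {α : ℤ × ℤ | TotPos D α ∧ emb D α + embConj D α = 2 * (n:ℝ)} with hSdef
    have hfin : S.Finite := S_finite D hD n
    have hPK : PK D n = ∑ α ∈ hfin.toFinset, pK D α := by
      rw [PK, if_neg hn']
      exact finsum_mem_eq_finite_toFinset_sum _ hfin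
    rw [← ZMod.natCast_eq_natCast_iff]
    rw [hPK]
    push_cast
    -- fixed points
    have hmemS : ∀ α, α ∈ hfin.toFinset ↔ TotPos D α ∧ emb D α + embConj D α = 2 * (n:ℝ) := by
      intro α; rw [Set.Finite.mem_toFinset]; exact Iff.rfl
    have hcS : ∀ α ∈ hfin.toFinset, c D α ∈ hfin.toFinset := by
      intro α hα
      rw [hmemS] at hα ⊢
      exact ⟨totPos_c D α hα.1, by rw [emb_c, embConj_c]; linarith [hα.2]⟩
    have hfix : ∀ α ∈ hfin.toFinset, c D α = α → α = ((n:ℤ), 0) := by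
      intro α hα hc
      have h2 := c_eq_self D α hc
      rw [hmemS] at hα
      have he : emb D α = (α.1 : ℝ) := by unfold emb; rw [h2]; simp
      have he' : embConj D α = (α.1 : ℝ) := by unfold embConj; rw [h2]; simp
      have : (α.1 : ℝ) + (α.1 : ℝ) = 2 * (n:ℝ) := by
        have h3 := hα.2; rw [he, he'] at h3; exact h3
      have h1 : α.1 = (n:ℤ) := by
        have : ((α.1:ℤ) : ℝ) = ((n:ℤ) : ℝ) := by push_cast; linarith
        exact_mod_cast this
      exact Prod.ext h1 h2
    have hsplit := Finset.sum_filter_add_sum_filter_not hfin.toFinset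
      (fun α => c D α = α) (fun α => ((pK D α : ZMod 2)))
    have hnonfix : ∑ α ∈ hfin.toFinset.filter (fun α => ¬ c D α = α),
        ((pK D α : ZMod 2)) = 0 := by
      apply Finset.sum_involution (g := fun α _ => c D α)
      · intro a ha
        rw [pK_c]
        exact CharTwo.add_self_eq_zero _
      · intro a ha _
        exact (Finset.mem_filter.1 ha).2
      · intro a ha
        rw [Finset.mem_filter] at ha ⊢
        exact ⟨hcS a ha.1, by rw [c_c]; exact fun h => ha.2 h.symm⟩
      · intro a ha; exact c_c D a
    have hfixsum : ∑ α ∈ hfin.toFinset.filter (fun α => c D α = α),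
        ((pK D α : ZMod 2)) = (pK D ((n:ℤ), 0) : ZMod 2) := by
      have : hfin.toFinset.filter (fun α => c D α = α) = {((n:ℤ), 0)} := by
        apply Finset.ext
        intro α
        rw [Finset.mem_filter, Finset.mem_singleton]
        constructor
        · rintro ⟨hα, hc⟩; exact hfix α hα hc
        · rintro rfl
          refine ⟨?_, ?_⟩
          · rw [hmemS]
            have he : emb D ((n:ℤ), 0) = (n : ℝ) := by unfold emb; simp
            have he' : embConj D ((n:ℤ), 0) = (n : ℝ) := by unfold embConj; simp
            refine ⟨⟨?_, ?_⟩, ?_⟩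
            · rw [he]; exact_mod_cast hn
            · rw [he']; exact_mod_cast hn
            · rw [he, he']; ring
          · unfold c; split <;> simp
      rw [this, Finset.sum_singleton]
    calc (∑ α ∈ hfin.toFinset, (pK D α : ZMod 2))
        = ∑ α ∈ hfin.toFinset.filter (fun α => c D α = α), ((pK D α : ZMod 2))
          + ∑ α ∈ hfin.toFinset.filter (fun α => ¬ c D α = α), ((pK D α : ZMod 2)) := hsplit.symm
      _ = (pK D ((n:ℤ), 0) : ZMod 2) := by rw [hnonfix, hfixsum, add_zero]
end

section
/- Let D ≥ 2 be a squarefree integer and K = ℚ(√D), and let α = (⌈yξ_D⌉ + k) + yω_D with y, k ∈ ℤ≥0 not both zero. If α/α′ ≤ ε₊, where α′ is the Galois conjugate of α, then y < ((k+1)ε₊ − k)/(ξ_D + ω_D). -/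
/-- `ε₊`, the smallest totally positive unit of `𝓞 K` greater than `1`,
viewed as a real number. -/
noncomputable def epsPlus (D : ℤ) : ℝ :=
  sInf {x : ℝ | 1 < x ∧ ∃ u : ℤ × ℤ, TotPos D u ∧ emb D u * embConj D u = 1 ∧ emb D u = x}

theorem y_bound_of_ratio_le_epsPlus (D : ℤ) (hD : 2 ≤ D) (hsf : Squarefree D)
    (y k : ℕ) (hyk : ¬(y = 0 ∧ k = 0))
    (h : emb D (⌈(y : ℝ) * xiD D⌉ + (k : ℤ), (y : ℤ)) /
          embConj D (⌈(y : ℝ) * xiD D⌉ + (k : ℤ), (y : ℤ)) ≤ epsPlus D) :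
    (y : ℝ) < (((k : ℝ) + 1) * epsPlus D - (k : ℝ)) / (xiD D + omegaD D) := by
  set s : ℝ := Real.sqrt (D : ℝ) with hs
  have hs1 : 1 < s := by
    rw [hs, show (1:ℝ) = Real.sqrt 1 by simp]
    exact Real.sqrt_lt_sqrt (by norm_num) (by exact_mod_cast hD.trans_lt' (by norm_num))
  have hspos : 0 < s := lt_trans one_pos hs1
  have hirr : Irrational s := by
    rw [hs, irrational_sqrt_intCast_iff]
    refine ⟨fun hsq => ?_, by omega⟩
    obtain ⟨r, hr⟩ := hsq
    have hu : IsUnit r := hsf r (by rw [hr])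
    rw [Int.isUnit_iff] at hu
    rcases hu with h1 | h1 <;> rw [h1] at hr <;> omega
  -- basic identities
  have hxo : 0 < xiD D + omegaD D := by
    unfold xiD omegaD omegaD'
    split <;> [skip; skip] <;> first
      | (show (0:ℝ) < -((1 - s) / 2) + (1 + s) / 2; linarith)
      | (show (0:ℝ) < - -s + s; linarith)
  have hconj : omegaD' D = -xiD D := by unfold xiD; ring
  set ξ : ℝ := xiD D with hξ
  set t : ℝ := ξ + omegaD D with ht
  set c : ℤ := ⌈(y : ℝ) * ξ⌉ with hc
  set f : ℝ := (c : ℝ) - (y : ℝ) * ξ with hf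
  have hf0 : 0 ≤ f := by
    have := Int.le_ceil ((y : ℝ) * ξ)
    simp [hf]; linarith
  have hf1 : f < 1 := by
    have := Int.ceil_lt_add_one ((y : ℝ) * ξ)
    simp [hf]; linarith
  have hembConj : embConj D (c + (k : ℤ), (y : ℤ)) = f + k := by
    simp [embConj, hconj, hf]; ring
  have hemb : emb D (c + (k : ℤ), (y : ℤ)) = (y : ℝ) * t + (f + k) := by
    have : omegaD D = t - ξ := by rw [ht]; ring
    simp [emb, this, hf]; ring
  have hα' : 0 < f + (k : ℝ) := by
    rcases Nat.eq_zero_or_pos k with hk | hk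
    · subst hk
      have hy : y ≠ 0 := by tauto
      have hfne : f ≠ 0 := by
        intro h0
        have : ((y : ℝ) * ξ) = (c : ℝ) := by rw [hf] at h0; linarith
        have hirrξ : Irrational ((y : ℝ) * ξ) := by
          have hξirr : Irrational ξ := by
            rw [hξ]; unfold xiD omegaD'
            split
            · have h2 : -((1 - s) / 2) = (s - ((1:ℤ):ℝ)) / ((2:ℕ):ℝ) := by
                push_cast; ring
              rw [h2]
              exact (hirr.sub_intCast 1).div_natCast two_ne_zero
            · simpa using hirr
          have := hξirr.natCast_mul (m := y) hy
          simpa using this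
        exact hirrξ ⟨(c : ℚ), by push_cast; rw [this]⟩
      simp only [Nat.cast_zero, add_zero]
      exact lt_of_le_of_ne hf0 (Ne.symm hfne)
    · have : (1 : ℝ) ≤ (k : ℝ) := by exact_mod_cast hk
      linarith
  have hαpos : 0 < (y : ℝ) * t + (f + k) := by
    have : 0 ≤ (y : ℝ) * t := mul_nonneg (by positivity) hxo.le
    linarith
  rw [hemb, hembConj] at h
  have hε1 : 1 ≤ epsPlus D := by
    by_cases hne : {x : ℝ | 1 < x ∧ ∃ u : ℤ × ℤ,
        TotPos D u ∧ emb D u * embConj D u = 1 ∧ emb D u = x}.Nonempty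
    · exact le_csInf hne fun x hx => hx.1.le
    · exfalso
      rw [Set.not_nonempty_iff_eq_empty] at hne
      rw [epsPlus, hne, Real.sInf_empty] at h
      have := div_pos hαpos (by linarith : (0:ℝ) < f + (k:ℝ))
      linarith
  set ε : ℝ := epsPlus D with hε
  rw [lt_div_iff₀ hxo]
  rw [div_le_iff₀ (by linarith : (0:ℝ) < f + (k:ℝ))] at h
  nlinarith [mul_nonneg (by linarith : (0:ℝ) ≤ ε - 1) (by linarith : (0:ℝ) ≤ 1 - f)]
end
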